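/- arXiv:1509.01011 — 7 statements merged into one kernel-verified Lean document; each statement's English description precedes it below -/
import Mathlib

section
/- Let C be a compact convex subset of a finite-dimensional real vector space M and let g₁, g₂ : C → ℝ be continuous concave functions. Let C_max be the set of points where g₁ + g₂ attains its maximum on C. Then there exists u₀ in the dual space N such that for all x₁, x₂ ∈ C_max, g₁(x₂) - g₁(x₁) = ⟨u₀, x₂ - x₁⟩ and g₂(x₂) - g₂(x₁) = -⟨u₀, x₂ - x₁⟩ (i.e., the restrictions of g₁ and g₂ to C_max are affine with opposite slopes). -/
open Finset

open Finset

private lemma max_sub_max_neg (a : ℝ) : max a 0 - max (-a) 0 = a := by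
  rcases le_total a 0 with h | h
  · rw [max_eq_right h, max_eq_left (by linarith)]; ring
  · rw [max_eq_left h, max_eq_right (by linarith)]; ring

/-- Key combinatorial lemma: if `h` is both convex and concave on `D`, `0 ∈ D`,
`h 0 = 0`, and `d ∈ D` is a (not necessarily convex) linear combination of
elements of `D`, then `h d` is the corresponding combination of values. -/
private lemma core_sum {M : Type*} [AddCommGroup M] [Module ℝ M]
    (D : Set M) (h : M → ℝ)
    (hcv : ConvexOn ℝ D h) (hcc : ConcaveOn ℝ D h)
    (h0 : (0:M) ∈ D) (h00 : h 0 = 0)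
    (s : Finset M) (hs : ↑s ⊆ D) (f : M → ℝ) (d : M) (hd : d ∈ D)
    (hsum : ∑ i ∈ s, f i • i = d) : h d = ∑ i ∈ s, f i * h i := by
  classical
  set A : ℝ := ∑ i ∈ s, max (f i) 0 with hA
  set B : ℝ := ∑ i ∈ s, max (-(f i)) 0 with hB
  have hA0 : 0 ≤ A := Finset.sum_nonneg fun i _ => le_max_right _ _
  have hB0 : 0 ≤ B := Finset.sum_nonneg fun i _ => le_max_right _ _
  set q : Option (Option M) → M := fun j => j.elim d (fun j' => j'.elim 0 id) with hq
  set e : M ↪ Option (Option M) :=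
    ⟨fun x => some (some x), fun a b hab => by simpa using hab⟩ with he
  set t : Finset (Option (Option M)) := insert none (insert (some none) (s.map e)) with ht
  have hnone : (none : Option (Option M)) ∉ insert (some none) (s.map e) := by
    simp [he]
  have hsnone : (some (none : Option M)) ∉ s.map e := by
    simp [show ∀ x, e x = some (some x) from fun x => rfl]
  set w₁ : Option (Option M) → ℝ :=
    fun j => j.elim 1 (fun j' => j'.elim (A+1) (fun x => max (-(f x)) 0)) with hw₁
  set w₂ : Option (Option M) → ℝ :=
    fun j => j.elim 0 (fun j' => j'.elim (B+2) (fun x => max (f x) 0)) with hw₂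
  have hsum_t : ∀ (g : Option (Option M) → ℝ),
      ∑ j ∈ t, g j = g none + (g (some none) + ∑ i ∈ s, g (some (some i))) := by
    intro g
    rw [ht, Finset.sum_insert hnone, Finset.sum_insert hsnone, Finset.sum_map]
    simp [show ∀ x, e x = some (some x) from fun x => rfl]
  have hsum_tM : ∀ (g : Option (Option M) → M),
      ∑ j ∈ t, g j = g none + (g (some none) + ∑ i ∈ s, g (some (some i))) := by
    intro g
    rw [ht, Finset.sum_insert hnone, Finset.sum_insert hsnone, Finset.sum_map]
    simp [show ∀ x, e x = some (some x) from fun x => rfl]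
  have hT₁ : ∑ j ∈ t, w₁ j = A + B + 2 := by
    rw [hsum_t]; simp [hw₁]; ring
  have hT₂ : ∑ j ∈ t, w₂ j = A + B + 2 := by
    rw [hsum_t]; simp [hw₂]; ring
  have hP : ∑ j ∈ t, w₁ j • q j = ∑ j ∈ t, w₂ j • q j := by
    rw [hsum_tM, hsum_tM]
    simp only [hw₁, hw₂, hq, Option.elim, smul_zero, one_smul, zero_smul, id]
    have : ∑ i ∈ s, max (f i) 0 • i - ∑ i ∈ s, max (-(f i)) 0 • i = d := by
      rw [← Finset.sum_sub_distrib]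
      rw [← hsum]
      refine Finset.sum_congr rfl fun i _ => ?_
      rw [← sub_smul, max_sub_max_neg]
    have h2 : ∑ i ∈ s, max (f i) 0 • i = d + ∑ i ∈ s, max (-(f i)) 0 • i := by
      rw [← this]; abel
    rw [h2]; abel
  have hw₁0 : ∀ j ∈ t, 0 ≤ w₁ j := by
    rintro (_ | (_ | x)) _
    · norm_num [hw₁]
    · simp only [hw₁, Option.elim]; linarith
    · simp only [hw₁, Option.elim]; exact le_max_right _ _
  have hw₂0 : ∀ j ∈ t, 0 ≤ w₂ j := by
    rintro (_ | (_ | x)) _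
    · norm_num [hw₂]
    · simp only [hw₂, Option.elim]; linarith
    · simp only [hw₂, Option.elim]; exact le_max_right _ _
  have hmem : ∀ j ∈ t, q j ∈ D := by
    rintro (_ | (_ | x)) hj
    · exact hd
    · exact h0
    · have : x ∈ s := by
        simp [ht, show ∀ x, e x = some (some x) from fun x => rfl] at hj; exact hj
      exact hs this
  have hpos₁ : 0 < ∑ j ∈ t, w₁ j := by rw [hT₁]; linarith
  have hpos₂ : 0 < ∑ j ∈ t, w₂ j := by rw [hT₂]; linarith
  have hcm : t.centerMass w₁ q = t.centerMass w₂ q := by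
    rw [Finset.centerMass, Finset.centerMass, hT₁, hT₂, hP]
  have e₁ := hcc.le_map_centerMass hw₁0 hpos₁ hmem
  have e₂ := hcv.map_centerMass_le hw₂0 hpos₂ hmem
  have e₃ := hcv.map_centerMass_le hw₁0 hpos₁ hmem
  have e₄ := hcc.le_map_centerMass hw₂0 hpos₂ hmem
  rw [hcm] at e₁ e₃
  have heq : t.centerMass w₁ (h ∘ q) = t.centerMass w₂ (h ∘ q) := le_antisymm
    (le_trans e₁ e₂) (le_trans e₄ e₃)
  rw [Finset.centerMass, Finset.centerMass, hT₁, hT₂] at heq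
  have hR : (0:ℝ) < A + B + 2 := by linarith
  have heq2 : ∑ j ∈ t, w₁ j • (h ∘ q) j = ∑ j ∈ t, w₂ j • (h ∘ q) j :=
    mul_left_cancel₀ (inv_ne_zero hR.ne') (by simpa [smul_eq_mul] using heq)
  rw [hsum_t, hsum_t] at heq2
  simp only [hw₁, hw₂, hq, Option.elim, Function.comp, h00, smul_eq_mul, mul_zero, mul_one,
    zero_mul, one_mul, id] at heq2
  have hfin : ∑ i ∈ s, max (f i) 0 * h i - ∑ i ∈ s, max (-(f i)) 0 * h i
      = ∑ i ∈ s, f i * h i := by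
    rw [← Finset.sum_sub_distrib]
    refine Finset.sum_congr rfl fun i _ => ?_
    rw [← sub_mul, max_sub_max_neg]
  linarith [heq2, hfin]

/-- On a compact convex subset `C` of a finite-dimensional real vector
space, given continuous concave `g₁ g₂ : C → ℝ`, there is a linear functional `u₀`
on `M` such that on the set `C_max` of maximizers of `g₁ + g₂`, the restrictions of
`g₁` and `g₂` are affine with opposite slopes given by `u₀`. -/
theorem stmt0 {M : Type*} [NormedAddCommGroup M] [NormedSpace ℝ M]
    [FiniteDimensional ℝ M]
    (C : Set M) (hCcpt : IsCompact C) (hCconv : Convex ℝ C) (hCne : C.Nonempty)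
    (g₁ g₂ : M → ℝ)
    (hg₁ : ConcaveOn ℝ C g₁) (hg₂ : ConcaveOn ℝ C g₂)
    (hc₁ : ContinuousOn g₁ C) (hc₂ : ContinuousOn g₂ C) :
    ∃ u₀ : Module.Dual ℝ M,
      ∀ x₁ ∈ {x ∈ C | ∀ y ∈ C, g₁ y + g₂ y ≤ g₁ x + g₂ x},
      ∀ x₂ ∈ {x ∈ C | ∀ y ∈ C, g₁ y + g₂ y ≤ g₁ x + g₂ x},
        g₁ x₂ - g₁ x₁ = u₀ (x₂ - x₁) ∧ g₂ x₂ - g₂ x₁ = -(u₀ (x₂ - x₁)) := by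
  classical
  set S : Set M := {x ∈ C | ∀ y ∈ C, g₁ y + g₂ y ≤ g₁ x + g₂ x} with hSdef
  by_cases hSne : S.Nonempty
  swap
  · exact ⟨0, fun x₁ hx₁ x₂ hx₂ => absurd ⟨x₁, hx₁⟩ hSne⟩
  obtain ⟨x₀, hx₀⟩ := hSne
  have hmaxeq : ∀ x ∈ S, ∀ y ∈ S, g₁ x + g₂ x = g₁ y + g₂ y := fun x hx y hy =>
    le_antisymm (hy.2 x hx.1) (hx.2 y hy.1)
  have affS : ∀ x ∈ S, ∀ y ∈ S, ∀ a b : ℝ, 0 ≤ a → 0 ≤ b → a + b = 1 →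
      (a • x + b • y ∈ S ∧ g₁ (a • x + b • y) = a * g₁ x + b * g₁ y) := by
    intro x hx y hy a b ha hb hab
    have hzC : a • x + b • y ∈ C := hCconv hx.1 hy.1 ha hb hab
    have h1 : a * g₁ x + b * g₁ y ≤ g₁ (a • x + b • y) := by
      have := hg₁.2 hx.1 hy.1 ha hb hab
      simpa [smul_eq_mul] using this
    have h2 : a * g₂ x + b * g₂ y ≤ g₂ (a • x + b • y) := by
      have := hg₂.2 hx.1 hy.1 ha hb hab
      simpa [smul_eq_mul] using this
    have h3 : g₁ (a • x + b • y) + g₂ (a • x + b • y) ≤ g₁ x + g₂ x := hx.2 _ hzC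
    have h4 : g₁ y + g₂ y = g₁ x + g₂ x := hmaxeq y hy x hx
    have h5 : b * (g₁ y + g₂ y) = b * (g₁ x + g₂ x) := by rw [h4]
    have h6 : a * (g₁ x + g₂ x) + b * (g₁ x + g₂ x) = g₁ x + g₂ x := by
      rw [← add_mul, hab, one_mul]
    have hsz : g₁ (a • x + b • y) + g₂ (a • x + b • y) = g₁ x + g₂ x :=
      le_antisymm h3 (by nlinarith)
    have hg1 : g₁ (a • x + b • y) = a * g₁ x + b * g₁ y :=
      le_antisymm (by nlinarith) h1
    refine ⟨⟨hzC, fun w hw => ?_⟩, hg1⟩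
    rw [hsz]; exact hx.2 w hw
  set D : Set M := (fun v => v - x₀) '' S with hDdef
  set h : M → ℝ := fun v => g₁ (v + x₀) - g₁ x₀ with hhdef
  have hD0 : (0:M) ∈ D := ⟨x₀, hx₀, sub_self x₀⟩
  have hh0 : h 0 = 0 := by simp [hhdef]
  have hval : ∀ x ∈ S, h (x - x₀) = g₁ x - g₁ x₀ := by
    intro x _
    simp [hhdef, sub_add_cancel]
  have affD : ∀ d ∈ D, ∀ e ∈ D, ∀ a b : ℝ, 0 ≤ a → 0 ≤ b → a + b = 1 →
      (a • d + b • e ∈ D ∧ h (a • d + b • e) = a * h d + b * h e) := by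
    rintro _ ⟨x, hx, rfl⟩ _ ⟨y, hy, rfl⟩ a b ha hb hab
    obtain ⟨hzS, hg1⟩ := affS x hx y hy a b ha hb hab
    have hcomb : a • (x - x₀) + b • (y - x₀) = (a • x + b • y) - x₀ := by
      have h' : a • (x - x₀) + b • (y - x₀) = (a • x + b • y) - (a + b) • x₀ := by
        rw [add_smul, smul_sub, smul_sub]; abel
      rw [h', hab, one_smul]
    constructor
    · exact ⟨a • x + b • y, hzS, hcomb.symm⟩
    · rw [hcomb, hval _ hzS, hval x hx, hval y hy, hg1]
      have : a * g₁ x₀ + b * g₁ x₀ = g₁ x₀ := by rw [← add_mul, hab, one_mul]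
      linarith
  have hDconv : Convex ℝ D := fun d hd e he a b ha hb hab =>
    (affD d hd e he a b ha hb hab).1
  have hcv : ConvexOn ℝ D h :=
    ⟨hDconv, fun d hd e he a b ha hb hab => by
      rw [smul_eq_mul, smul_eq_mul]; exact le_of_eq (affD d hd e he a b ha hb hab).2⟩
  have hcc : ConcaveOn ℝ D h :=
    ⟨hDconv, fun d hd e he a b ha hb hab => by
      rw [smul_eq_mul, smul_eq_mul]; exact ge_of_eq (affD d hd e he a b ha hb hab).2⟩
  obtain ⟨bset, hbD, hbspan, hbli⟩ := exists_linearIndependent ℝ D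
  have hbfin : bset.Finite := hbli.setFinite
  set s : Finset M := hbfin.toFinset with hsdef
  have hscoe : (↑s : Set M) = bset := hbfin.coe_toFinset
  have hsD : (↑s : Set M) ⊆ D := hscoe ▸ hbD
  set Bext := Module.Basis.extend hbli with hBext
  set u₀ : Module.Dual ℝ M := Bext.constr ℝ (fun x => h ↑x) with hu₀
  have hu_b : ∀ x ∈ bset, u₀ x = h x := by
    intro x hx
    have hx' : x ∈ LinearIndepOn.extend (v := id) hbli (Set.subset_univ _) :=
      LinearIndepOn.subset_extend (v := id) hbli _ hx
    have := Bext.constr_basis ℝ (fun x => h ↑x) ⟨x, hx'⟩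
    rwa [hBext, show (Module.Basis.extend hbli) ⟨x, hx'⟩ = x from
      Module.Basis.extend_apply_self hbli _] at this
  have hu : ∀ d ∈ D, u₀ d = h d := by
    intro d hd
    have hmem : d ∈ Submodule.span ℝ (↑s : Set M) := by
      rw [hscoe, hbspan]; exact Submodule.subset_span hd
    obtain ⟨f, -, hf⟩ := Submodule.mem_span_finset.mp hmem
    have hcore := core_sum D h hcv hcc hD0 hh0 s hsD f d hd hf
    calc u₀ d = u₀ (∑ i ∈ s, f i • i) := by rw [hf]
      _ = ∑ i ∈ s, f i * u₀ i := by
          rw [map_sum]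
          exact Finset.sum_congr rfl fun i _ => by rw [map_smul, smul_eq_mul]
      _ = ∑ i ∈ s, f i * h i := Finset.sum_congr rfl fun i hi => by
          rw [hu_b i (hbfin.mem_toFinset.mp hi)]
      _ = h d := hcore.symm
  refine ⟨u₀, ?_⟩
  intro x₁ hx₁ x₂ hx₂
  have hd₁ : x₁ - x₀ ∈ D := ⟨x₁, hx₁, rfl⟩
  have hd₂ : x₂ - x₀ ∈ D := ⟨x₂, hx₂, rfl⟩
  have e1 : u₀ (x₂ - x₁) = g₁ x₂ - g₁ x₁ := by
    have hdiff : x₂ - x₁ = (x₂ - x₀) - (x₁ - x₀) := by abel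
    rw [hdiff, map_sub, hu _ hd₂, hu _ hd₁, hval _ hx₂, hval _ hx₁]
    ring
  refine ⟨e1.symm, ?_⟩
  have hme := hmaxeq x₁ hx₁ x₂ hx₂
  rw [e1]; linarith
end

section
/- Let C ⊂ M_ℝ be a compact convex set, g₁, g₂ : C → ℝ continuous concave functions, C_max the set where g₁+g₂ attains its maximum, x ∈ C_max and x' ∈ ri(C_max) (the relative interior of C_max). Then for i = 1, 2, the sup-differential ∂gᵢ(x') is a face of the convex set ∂gᵢ(x). In particular ∂gᵢ(x') ⊆ ∂gᵢ(x). -/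
open RealInnerProductSpace

/-- If `x ∈ S` and `x' ∈ ri S`, then `x'` lies strictly between `x` and some `y ∈ S`. -/
lemma extend_beyond_ri {E : Type*} [NormedAddCommGroup E] [NormedSpace ℝ E]
    (S : Set E) (x x' : E) (hxS : x ∈ S) (hx' : x' ∈ intrinsicInterior ℝ S) :
    ∃ y ∈ S, ∃ a b : ℝ, 0 < a ∧ 0 < b ∧ a + b = 1 ∧ a • x + b • y = x' := by
  obtain ⟨p, hp, hpx'⟩ := hx'
  have hx'S : x' ∈ S := intrinsicInterior_subset ⟨p, hp, hpx'⟩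
  have hxSp : x ∈ affineSpan ℝ S := subset_affineSpan ℝ S hxS
  have hx'Sp : x' ∈ affineSpan ℝ S := subset_affineSpan ℝ S hx'S
  -- the curve t ↦ x + (1+t)(x' - x) inside the affine span
  have hmem : ∀ t : ℝ, (1 + t) • (x' - x) + x ∈ affineSpan ℝ S := fun t =>
    (affineSpan ℝ S).smul_vsub_vadd_mem (1 + t) hx'Sp hxSp hxSp
  set c : ℝ → affineSpan ℝ S := fun t => ⟨(1 + t) • (x' - x) + x, hmem t⟩ with hc
  have hcont : Continuous c := by
    apply Continuous.subtype_mk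
    continuity
  have hc0 : c 0 = p := by
    apply Subtype.ext
    simp [hc, hpx']
  have hopen : IsOpen (c ⁻¹' interior ((↑) ⁻¹' S : Set (affineSpan ℝ S))) :=
    isOpen_interior.preimage hcont
  have h0mem : (0 : ℝ) ∈ c ⁻¹' interior ((↑) ⁻¹' S : Set (affineSpan ℝ S)) := by
    simp only [Set.mem_preimage, hc0]; exact hp
  obtain ⟨ε, hε, hball⟩ := Metric.isOpen_iff.mp hopen 0 h0mem
  set t : ℝ := ε / 2 with ht
  have htpos : 0 < t := by positivity
  have htball : t ∈ Metric.ball (0 : ℝ) ε := by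
    simp only [Metric.mem_ball, Real.dist_eq, sub_zero, abs_of_pos htpos]
    linarith
  have hcy : c t ∈ interior ((↑) ⁻¹' S : Set (affineSpan ℝ S)) := hball htball
  have hyS : (1 + t) • (x' - x) + x ∈ S := by
    have h := interior_subset hcy
    exact h
  have h1t : (1 : ℝ) + t ≠ 0 := by positivity
  refine ⟨(1 + t) • (x' - x) + x, hyS, t / (1 + t), 1 / (1 + t), ?_, ?_, ?_, ?_⟩
  · positivity
  · positivity
  · field_simp <;> ring
  · have hb1 : (1 / (1 + t)) * (1 + t) = 1 := by field_simp
    have hab1 : t / (1 + t) + 1 / (1 + t) = 1 := by field_simp <;> ring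
    calc (t / (1 + t)) • x + (1 / (1 + t)) • ((1 + t) • (x' - x) + x)
        = (t / (1 + t) + 1 / (1 + t)) • x + (x' - x) := by
          rw [smul_add, smul_smul, hb1, one_smul, add_smul]; abel
      _ = x' := by rw [hab1, one_smul]; abel

/-- Key lemma: if `x' = a x + b y` with `a, b > 0`, `a + b = 1`, and `g` is affine on this
combination, then `∂g(x')` is a face of `∂g(x)`. -/
lemma key_face {n : ℕ} (C : Set (EuclideanSpace ℝ (Fin n)))
    (g : EuclideanSpace ℝ (Fin n) → ℝ) (x x' y : EuclideanSpace ℝ (Fin n))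
    (hxC : x ∈ C) (hx'C : x' ∈ C) (hyC : y ∈ C) (a b : ℝ)
    (ha : 0 < a) (hb : 0 < b) (hab : a + b = 1) (hcomb : a • x + b • y = x')
    (haff : a * g x + b * g y = g x') :
    IsExtreme ℝ {u : EuclideanSpace ℝ (Fin n) | ∀ z ∈ C, g z - g x ≤ ⟪u, z - x⟫}
      {u : EuclideanSpace ℝ (Fin n) | ∀ z ∈ C, g z - g x' ≤ ⟪u, z - x'⟫} := by
  -- For any u ∈ ∂g(x'), we have ⟪u, x - x'⟫ = g x - g x'
  have hfact : ∀ u : EuclideanSpace ℝ (Fin n),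
      (∀ z ∈ C, g z - g x' ≤ ⟪u, z - x'⟫) → ⟪u, x - x'⟫ = g x - g x' := by
    intro u hu
    have h1 : g x - g x' ≤ ⟪u, x - x'⟫ := hu x hxC
    have h2 : g y - g x' ≤ ⟪u, y - x'⟫ := hu y hyC
    have h0 : a • (x - x') + b • (y - x') = 0 := by
      rw [← hcomb]
      have : a + b = 1 := hab
      match_scalars <;> nlinarith [this]
    have hinner : a * ⟪u, x - x'⟫ + b * ⟪u, y - x'⟫ = 0 := by
      have h := congrArg (fun v => (⟪u, v⟫ : ℝ)) h0
      simp only [inner_add_right, real_inner_smul_right, inner_zero_right] at h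
      exact h
    have he : a * (g x - g x') + b * (g y - g x') = 0 := by
      linear_combination haff - g x' * hab
    have p1 := mul_le_mul_of_nonneg_left h1 ha.le
    have p2 := mul_le_mul_of_nonneg_left h2 hb.le
    have hAA : a * ⟪u, x - x'⟫ = a * (g x - g x') := by linarith
    exact mul_left_cancel₀ ha.ne' hAA
  constructor
  · -- subset
    intro u hu z hz
    have heq := hfact u hu
    have h1 : g z - g x' ≤ ⟪u, z - x'⟫ := hu z hz
    have hsplit : ⟪u, z - x⟫ = ⟪u, z - x'⟫ - ⟪u, x - x'⟫ := by
      rw [← inner_sub_right]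
      congr 1
      abel
    rw [hsplit, heq]
    linarith
  · -- extremality
    intro u₁ hu₁ u₂ hu₂ u hu hseg
    obtain ⟨s, r, hs, hr, hsr, rfl⟩ := hseg
    have heq := hfact _ hu
    have hinner : s * ⟪u₁, x - x'⟫ + r * ⟪u₂, x - x'⟫ = g x - g x' := by
      rw [← heq, inner_add_left, real_inner_smul_left, real_inner_smul_left]
    have hle₁ : ⟪u₁, x - x'⟫ ≤ g x - g x' := by
      have := hu₁ x' hx'C
      have hs : ⟪u₁, x' - x⟫ = -⟪u₁, x - x'⟫ := by
        rw [← inner_neg_right]; congr 1; abel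
      rw [hs] at this; linarith
    have hle₂ : ⟪u₂, x - x'⟫ ≤ g x - g x' := by
      have := hu₂ x' hx'C
      have hs : ⟪u₂, x' - x⟫ = -⟪u₂, x - x'⟫ := by
        rw [← inner_neg_right]; congr 1; abel
      rw [hs] at this; linarith
    have hD : s * (g x - g x') + r * (g x - g x') = g x - g x' := by
      linear_combination (g x - g x') * hsr
    have p1 := mul_le_mul_of_nonneg_left hle₁ hs.le
    have p2 := mul_le_mul_of_nonneg_left hle₂ hr.le
    have heq₁ : ⟪u₁, x - x'⟫ = g x - g x' := by
      have : s * ⟪u₁, x - x'⟫ = s * (g x - g x') := by linarith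
      exact mul_left_cancel₀ hs.ne' this
    have heq₂ : ⟪u₂, x - x'⟫ = g x - g x' := by
      have : r * ⟪u₂, x - x'⟫ = r * (g x - g x') := by linarith
      exact mul_left_cancel₀ hr.ne' this
    · intro z hz
      have h1 : g z - g x ≤ ⟪u₁, z - x⟫ := hu₁ z hz
      have hsplit : ⟪u₁, z - x'⟫ = ⟪u₁, z - x⟫ + ⟪u₁, x - x'⟫ := by
        rw [← inner_add_right]; congr 1; abel
      rw [hsplit, heq₁]; linarith

/-- For continuous concave `g₁, g₂` on a compact convex `C`, a maximizer `x`
of `g₁ + g₂` and a point `x'` in the relative interior of the set `C_max` of maximizers,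
the sup-differential `∂gᵢ(x')` is a face of `∂gᵢ(x)` for `i = 1, 2`
(in particular `∂gᵢ(x') ⊆ ∂gᵢ(x)`). -/
theorem stmt2 {n : ℕ}
    (C : Set (EuclideanSpace ℝ (Fin n))) (hCcpt : IsCompact C) (hCconv : Convex ℝ C)
    (g₁ g₂ : EuclideanSpace ℝ (Fin n) → ℝ)
    (hg₁ : ConcaveOn ℝ C g₁) (hg₂ : ConcaveOn ℝ C g₂)
    (hc₁ : ContinuousOn g₁ C) (hc₂ : ContinuousOn g₂ C)
    (x x' : EuclideanSpace ℝ (Fin n))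
    (hx : x ∈ {p ∈ C | ∀ y ∈ C, g₁ y + g₂ y ≤ g₁ p + g₂ p})
    (hx' : x' ∈ intrinsicInterior ℝ {p ∈ C | ∀ y ∈ C, g₁ y + g₂ y ≤ g₁ p + g₂ p}) :
    IsExtreme ℝ {u : EuclideanSpace ℝ (Fin n) | ∀ z ∈ C, g₁ z - g₁ x ≤ ⟪u, z - x⟫}
      {u : EuclideanSpace ℝ (Fin n) | ∀ z ∈ C, g₁ z - g₁ x' ≤ ⟪u, z - x'⟫} ∧
    IsExtreme ℝ {u : EuclideanSpace ℝ (Fin n) | ∀ z ∈ C, g₂ z - g₂ x ≤ ⟪u, z - x⟫}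
      {u : EuclideanSpace ℝ (Fin n) | ∀ z ∈ C, g₂ z - g₂ x' ≤ ⟪u, z - x'⟫} := by
  set S : Set (EuclideanSpace ℝ (Fin n)) :=
    {p ∈ C | ∀ y ∈ C, g₁ y + g₂ y ≤ g₁ p + g₂ p} with hS
  have hx'S : x' ∈ S := intrinsicInterior_subset hx'
  obtain ⟨y, hyS, a, b, ha, hb, hab, hcomb⟩ := extend_beyond_ri S x x' hx hx'
  have hxC : x ∈ C := hx.1
  have hx'C : x' ∈ C := hx'S.1
  have hyC : y ∈ C := hyS.1
  -- all three points achieve the same maximum value of g₁ + g₂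
  have hxx' : g₁ x + g₂ x = g₁ x' + g₂ x' :=
    le_antisymm (hx'S.2 x hxC) (hx.2 x' hx'C)
  have hyx' : g₁ y + g₂ y = g₁ x' + g₂ x' :=
    le_antisymm (hx'S.2 y hyC) (hyS.2 x' hx'C)
  -- concavity inequalities
  have hcc₁ : a * g₁ x + b * g₁ y ≤ g₁ x' := by
    have := hg₁.2 hxC hyC ha.le hb.le hab
    rwa [hcomb, smul_eq_mul, smul_eq_mul] at this
  have hcc₂ : a * g₂ x + b * g₂ y ≤ g₂ x' := by
    have := hg₂.2 hxC hyC ha.le hb.le hab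
    rwa [hcomb, smul_eq_mul, smul_eq_mul] at this
  -- the sum is exactly the max, so each inequality is an equality
  have hsum : a * g₁ x + a * g₂ x + b * g₁ y + b * g₂ y = g₁ x' + g₂ x' := by
    linear_combination (g₁ x' + g₂ x') * hab + a * hxx' + b * hyx'
  have haff₁ : a * g₁ x + b * g₁ y = g₁ x' := by linarith
  have haff₂ : a * g₂ x + b * g₂ y = g₂ x' := by linarith
  exact ⟨key_face C g₁ x x' y hxC hx'C hyC a b ha hb hab hcomb haff₁,
    key_face C g₂ x x' y hxC hx'C hyC a b ha hb hab hcomb haff₂⟩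
end

section
/- Let C ⊂ M_ℝ be a compact convex subset with nonempty interior and g₁, g₂ : C → ℝ continuous concave functions. Fix x in the set where g₁+g₂ attains its maximum. Then the convex set B = ∂g₁(x) ∩ (-∂g₂(x)) is bounded, and the minimal face F of ∂g₁(x) containing B contains no lines (i.e., F contains no subset of the form ℝu₁ + u₂ with u₁ ≠ 0). -/
open RealInnerProductSpace

private lemma aux_pt {n : ℕ} {C : Set (EuclideanSpace ℝ (Fin n))} {p : EuclideanSpace ℝ (Fin n)}
    {ε : ℝ} (hε : 0 < ε) (hball : Metric.ball p ε ⊆ C)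
    (v : EuclideanSpace ℝ (Fin n)) (hv : v ≠ 0) :
    ∃ z ∈ C, ⟪v, z - p⟫ = ε / 2 * ‖v‖ := by
  have hvn : (0:ℝ) < ‖v‖ := norm_pos_iff.mpr hv
  refine ⟨p + (ε / (2 * ‖v‖)) • v, hball ?_, ?_⟩
  · rw [Metric.mem_ball, dist_eq_norm]
    simp only [add_sub_cancel_left]
    rw [norm_smul, Real.norm_eq_abs, abs_of_pos (by positivity)]
    have h : ε / (2 * ‖v‖) * ‖v‖ = ε / 2 := by field_simp
    rw [h]
    linarith
  · simp only [add_sub_cancel_left, real_inner_smul_right,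
      real_inner_self_eq_norm_mul_norm]
    field_simp

/-- For continuous concave `g₁, g₂` on a compact convex `C ⊂ ℝⁿ` with
nonempty interior and a maximizer `x` of `g₁ + g₂`, the set
`B = ∂g₁(x) ∩ (-∂g₂(x))` is bounded, and the minimal face `F` of `∂g₁(x)`
containing `B` contains no lines. -/
theorem stmt3 {n : ℕ}
    (C : Set (EuclideanSpace ℝ (Fin n))) (hCcpt : IsCompact C) (hCconv : Convex ℝ C)
    (hCint : (interior C).Nonempty)
    (g₁ g₂ : EuclideanSpace ℝ (Fin n) → ℝ)
    (hg₁ : ConcaveOn ℝ C g₁) (hg₂ : ConcaveOn ℝ C g₂)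
    (hc₁ : ContinuousOn g₁ C) (hc₂ : ContinuousOn g₂ C)
    (x : EuclideanSpace ℝ (Fin n))
    (hx : x ∈ {p ∈ C | ∀ y ∈ C, g₁ y + g₂ y ≤ g₁ p + g₂ p})
    (A B F : Set (EuclideanSpace ℝ (Fin n)))
    (hA : A = {u | ∀ z ∈ C, g₁ z - g₁ x ≤ ⟪u, z - x⟫})
    (hB : B = A ∩ -{u | ∀ z ∈ C, g₂ z - g₂ x ≤ ⟪u, z - x⟫})
    (hF : F = ⋂₀ {F' : Set (EuclideanSpace ℝ (Fin n)) | IsExtreme ℝ A F' ∧ B ⊆ F'}) :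
    Bornology.IsBounded B ∧
      ¬ ∃ u₁ u₂ : EuclideanSpace ℝ (Fin n), u₁ ≠ 0 ∧ ∀ t : ℝ, t • u₁ + u₂ ∈ F := by
  obtain ⟨hxC, hxmax⟩ := hx
  obtain ⟨p, hp⟩ := hCint
  obtain ⟨ε, hε, hball⟩ := Metric.isOpen_iff.mp isOpen_interior p hp
  replace hball : Metric.ball p ε ⊆ C := hball.trans interior_subset
  have hpC : p ∈ C := hball (Metric.mem_ball_self hε)
  obtain ⟨K₁, hK₁⟩ := hCcpt.exists_bound_of_continuousOn hc₁
  obtain ⟨K₂, hK₂⟩ := hCcpt.exists_bound_of_continuousOn hc₂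
  have hK₁0 : 0 ≤ K₁ := le_trans (norm_nonneg _) (hK₁ x hxC)
  have hK₂0 : 0 ≤ K₂ := le_trans (norm_nonneg _) (hK₂ x hxC)
  constructor
  · -- boundedness of B
    have hsub : B ⊆ Metric.closedBall 0 ((4 * K₁ + 4 * K₂) / ε) := by
      intro u hu
      rw [hB] at hu
      obtain ⟨hu1, hu2⟩ := hu
      rw [hA] at hu1
      rw [Set.mem_neg] at hu2
      simp only [Set.mem_setOf_eq] at hu1 hu2
      rw [Metric.mem_closedBall, dist_zero_right]
      rcases eq_or_ne u 0 with rfl | hu0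
      · simp; positivity
      obtain ⟨z, hzC, hz⟩ := aux_pt hε hball u hu0
      -- ⟪u, z - p⟫ = ⟪u, z - x⟫ - ⟪u, p - x⟫
      have hsplit : ⟪u, z - p⟫ = ⟪u, z - x⟫ - ⟪u, p - x⟫ := by
        rw [← inner_sub_right]
        congr 1
        abel
      have hup1 : ⟪u, z - x⟫ ≤ g₂ x - g₂ z := by
        have := hu2 z hzC
        have h : g₂ z - g₂ x ≤ -⟪u, z - x⟫ := by
          rwa [inner_neg_left] at this
        linarith
      have hup2 : g₁ p - g₁ x ≤ ⟪u, p - x⟫ := hu1 p hpC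
      have hb1 : ‖g₁ p‖ ≤ K₁ := hK₁ p hpC
      have hb2 : ‖g₁ x‖ ≤ K₁ := hK₁ x hxC
      have hb3 : ‖g₂ z‖ ≤ K₂ := hK₂ z hzC
      have hb4 : ‖g₂ x‖ ≤ K₂ := hK₂ x hxC
      rw [Real.norm_eq_abs, abs_le] at hb1 hb2 hb3 hb4
      have key : ε / 2 * ‖u‖ ≤ 2 * K₁ + 2 * K₂ := by
        rw [← hz, hsplit]; linarith
      rw [← sub_nonneg] at key ⊢
      have : (4 * K₁ + 4 * K₂) / ε - ‖u‖ = (2 / ε) * ((2 * K₁ + 2 * K₂) - ε / 2 * ‖u‖) := by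
        field_simp; ring
      rw [this]
      positivity
    exact (Metric.isBounded_closedBall).subset hsub
  · -- no lines in F
    rintro ⟨u₁, u₂, hu₁, hline⟩
    -- F ⊆ A
    have hFA : F ⊆ A := by
      rw [hF]
      apply Set.sInter_subset_of_mem
      refine ⟨⟨subset_rfl, fun x₁ h₁ x₂ h₂ y hy _ => h₁⟩, ?_⟩
      rw [hB]; exact Set.inter_subset_left
    have hlineA : ∀ t : ℝ, ∀ z ∈ C, g₁ z - g₁ x ≤ t * ⟪u₁, z - x⟫ + ⟪u₂, z - x⟫ := by
      intro t z hz
      have := hFA (hline t)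
      rw [hA] at this
      have h := this z hz
      rwa [inner_add_left, real_inner_smul_left] at h
    have hperp : ∀ z ∈ C, ⟪u₁, z - x⟫ = 0 := by
      intro z hz
      by_contra hc
      set c := ⟪u₁, z - x⟫ with hcdef
      have := hlineA ((g₁ z - g₁ x - ⟪u₂, z - x⟫ - 1) / c) z hz
      rw [div_mul_cancel₀ _ hc] at this
      linarith
    obtain ⟨z, hzC, hz⟩ := aux_pt hε hball u₁ hu₁
    have h1 : ⟪u₁, z - x⟫ = 0 := hperp z hzC
    have h2 : ⟪u₁, p - x⟫ = 0 := hperp p hpC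
    have hsplit : ⟪u₁, z - p⟫ = ⟪u₁, z - x⟫ - ⟪u₁, p - x⟫ := by
      rw [← inner_sub_right]; congr 1; abel
    rw [hsplit, h1, h2, sub_zero] at hz
    have hvn : (0:ℝ) < ‖u₁‖ := norm_pos_iff.mpr hu₁
    nlinarith
end

section
/- Let C ⊂ M_ℝ = ℝⁿ be a compact convex set with nonempty interior, g₁, g₂ : C → ℝ continuous concave functions, and let g_i^∨(u) = inf_{x ∈ C} (⟨u, x⟩ - g_i(x)) denote the Legendre–Fenchel dual, a concave function on N_ℝ. Define Φ on the space ℰ of Borel probability measures on N_ℝ with finite first moment by Φ(μ) = ∫ g₁^∨ dμ + g₂^∨(-E[μ]) + max_{x ∈ C}(g₁(x)+g₂(x)), where E[μ] = ∫ u dμ(u). Then Φ is upper semicontinuous with respect to the weak-∗ topology induced by bounded continuous functions on N_ℝ. -/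
open MeasureTheory RealInnerProductSpace
open Filter Topology

/-- The Legendre–Fenchel dual `g^∨(u) = inf_{x ∈ C} (⟨u,x⟩ - g(x))`. -/
noncomputable def lfDual {n : ℕ} (C : Set (EuclideanSpace ℝ (Fin n)))
    (g : EuclideanSpace ℝ (Fin n) → ℝ) (u : EuclideanSpace ℝ (Fin n)) : ℝ :=
  sInf ((fun x => ⟪u, x⟫ - g x) '' C)

/-- The functional `Φ(μ) = ∫ g₁^∨ dμ + g₂^∨(-E[μ]) + max_C (g₁+g₂)`. -/
noncomputable def phiFun {n : ℕ} (C : Set (EuclideanSpace ℝ (Fin n)))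
    (g₁ g₂ : EuclideanSpace ℝ (Fin n) → ℝ)
    (μ : Measure (EuclideanSpace ℝ (Fin n))) : ℝ :=
  (∫ u, lfDual C g₁ u ∂μ) + lfDual C g₂ (-(∫ u, u ∂μ)) +
    sSup ((fun x => g₁ x + g₂ x) '' C)

/-- The space `ℰ` of Borel probability measures on `ℝⁿ` with finite first moment,
with the topology induced by the weak-∗ topology w.r.t. bounded continuous functions. -/
abbrev finiteFirstMoment (n : ℕ) :=
  {μ : ProbabilityMeasure (EuclideanSpace ℝ (Fin n)) //
    Integrable (fun u => ‖u‖) (μ : Measure (EuclideanSpace ℝ (Fin n)))}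

section Aux

variable {n : ℕ} {C : Set (EuclideanSpace ℝ (Fin n))}
  {g : EuclideanSpace ℝ (Fin n) → ℝ} {R B : ℝ}

private lemma lfDual_bddBelow
    (hR : ∀ x ∈ C, ‖x‖ ≤ R) (hB : ∀ x ∈ C, |g x| ≤ B)
    (u : EuclideanSpace ℝ (Fin n)) :
    BddBelow ((fun x => ⟪u, x⟫ - g x) '' C) := by
  refine ⟨-(‖u‖ * R + B), ?_⟩
  rintro a ⟨x, hx, rfl⟩
  have h1 : |⟪u, x⟫| ≤ ‖u‖ * ‖x‖ := abs_real_inner_le_norm u x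
  have h4 : ‖u‖ * ‖x‖ ≤ ‖u‖ * R := mul_le_mul_of_nonneg_left (hR x hx) (norm_nonneg u)
  have h5 := (abs_le.mp h1).1
  have h6 := (abs_le.mp (hB x hx)).2
  simp only
  linarith

private lemma lfDual_le
    (hR : ∀ x ∈ C, ‖x‖ ≤ R) (hB : ∀ x ∈ C, |g x| ≤ B)
    {x : EuclideanSpace ℝ (Fin n)} (hx : x ∈ C) (u : EuclideanSpace ℝ (Fin n)) :
    lfDual C g u ≤ ⟪u, x⟫ - g x :=
  csInf_le (lfDual_bddBelow hR hB u) ⟨x, hx, rfl⟩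

private lemma abs_lfDual_le (hCne : C.Nonempty)
    (hR : ∀ x ∈ C, ‖x‖ ≤ R) (hB : ∀ x ∈ C, |g x| ≤ B)
    (u : EuclideanSpace ℝ (Fin n)) :
    |lfDual C g u| ≤ ‖u‖ * R + B := by
  rw [abs_le]
  constructor
  · rw [lfDual]
    refine le_csInf (hCne.image _) ?_
    rintro a ⟨x, hx, rfl⟩
    have h1 := (abs_le.mp (abs_real_inner_le_norm u x)).1
    have h4 : ‖u‖ * ‖x‖ ≤ ‖u‖ * R := mul_le_mul_of_nonneg_left (hR x hx) (norm_nonneg u)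
    have h6 := (abs_le.mp (hB x hx)).2
    simp only
    linarith
  · obtain ⟨x, hx⟩ := hCne
    refine (lfDual_le hR hB hx u).trans ?_
    have h1 := (abs_le.mp (abs_real_inner_le_norm u x)).2
    have h4 : ‖u‖ * ‖x‖ ≤ ‖u‖ * R := mul_le_mul_of_nonneg_left (hR x hx) (norm_nonneg u)
    have h6 := (abs_le.mp (hB x hx)).1
    linarith

private lemma lfDual_continuous (hCne : C.Nonempty) (hR0 : 0 ≤ R)
    (hR : ∀ x ∈ C, ‖x‖ ≤ R) (hB : ∀ x ∈ C, |g x| ≤ B) :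
    Continuous (lfDual C g) := by
  have key : ∀ u v : EuclideanSpace ℝ (Fin n),
      lfDual C g u ≤ lfDual C g v + R * ‖u - v‖ := by
    intro u v
    have step : ∀ a ∈ (fun x => ⟪v, x⟫ - g x) '' C, lfDual C g u - R * ‖u - v‖ ≤ a := by
      rintro a ⟨x, hx, rfl⟩
      have h2 : lfDual C g u ≤ ⟪u, x⟫ - g x := lfDual_le hR hB hx u
      have h3 : ⟪u, x⟫ - ⟪v, x⟫ = ⟪u - v, x⟫ := by rw [inner_sub_left]
      have h4 := (abs_le.mp (abs_real_inner_le_norm (u - v) x)).2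
      have h5 : ‖u - v‖ * ‖x‖ ≤ ‖u - v‖ * R :=
        mul_le_mul_of_nonneg_left (hR x hx) (norm_nonneg _)
      simp only
      nlinarith [mul_comm R ‖u - v‖]
    have h6 : lfDual C g u - R * ‖u - v‖ ≤ lfDual C g v :=
      le_csInf (hCne.image _) step
    linarith
  rw [Metric.continuous_iff]
  intro u ε hε
  refine ⟨ε / (R + 1), by positivity, fun v hv => ?_⟩
  have h1 := key v u
  have h2 := key u v
  have hnorm : ‖v - u‖ = dist v u := (dist_eq_norm v u).symm
  have hnorm2 : ‖u - v‖ = dist v u := by rw [dist_eq_norm, norm_sub_rev]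
  rw [Real.dist_eq, abs_lt]
  have hd : 0 ≤ dist v u := dist_nonneg
  have hRd : R * dist v u ≤ R * (ε / (R + 1)) :=
    mul_le_mul_of_nonneg_left hv.le hR0
  have hlt : R * (ε / (R + 1)) < ε := by
    rw [mul_div_assoc']
    rw [div_lt_iff₀ (by linarith)]
    nlinarith
  rw [hnorm] at h1
  rw [hnorm2] at h2
  exact ⟨by linarith, by linarith⟩

end Aux

/-- For `C ⊂ ℝⁿ` compact convex with nonempty interior and `g₁, g₂`
continuous concave on `C`, the functional `Φ` is upper semicontinuous on `ℰ`. -/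
theorem stmt5 {n : ℕ}
    (C : Set (EuclideanSpace ℝ (Fin n))) (hCcpt : IsCompact C) (hCconv : Convex ℝ C)
    (hCint : (interior C).Nonempty)
    (g₁ g₂ : EuclideanSpace ℝ (Fin n) → ℝ)
    (hg₁ : ConcaveOn ℝ C g₁) (hg₂ : ConcaveOn ℝ C g₂)
    (hc₁ : ContinuousOn g₁ C) (hc₂ : ContinuousOn g₂ C) :
    UpperSemicontinuous (fun μ : finiteFirstMoment n =>
      phiFun C g₁ g₂ (μ.1 : Measure (EuclideanSpace ℝ (Fin n)))) := by
  classical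
  have hCne : C.Nonempty := ⟨hCint.choose, interior_subset hCint.choose_spec⟩
  obtain ⟨R, hR⟩ : ∃ R, ∀ x ∈ C, ‖x‖ ≤ R :=
    hCcpt.exists_bound_of_continuousOn continuousOn_id
  have hR0 : 0 ≤ R := le_trans (norm_nonneg _) (hR _ hCne.choose_spec)
  obtain ⟨B₁, hB₁⟩ : ∃ B, ∀ x ∈ C, |g₁ x| ≤ B := by
    obtain ⟨B, hB⟩ := hCcpt.exists_bound_of_continuousOn hc₁
    exact ⟨B, fun x hx => by simpa [Real.norm_eq_abs] using hB x hx⟩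
  obtain ⟨B₂, hB₂⟩ : ∃ B, ∀ x ∈ C, |g₂ x| ≤ B := by
    obtain ⟨B, hB⟩ := hCcpt.exists_bound_of_continuousOn hc₂
    exact ⟨B, fun x hx => by simpa [Real.norm_eq_abs] using hB x hx⟩
  have hB₁0 : 0 ≤ B₁ := le_trans (abs_nonneg _) (hB₁ _ hCne.choose_spec)
  have hB₂0 : 0 ≤ B₂ := le_trans (abs_nonneg _) (hB₂ _ hCne.choose_spec)
  set M := sSup ((fun x => g₁ x + g₂ x) '' C) with hM
  have hcont₁ : Continuous (lfDual C g₁) := lfDual_continuous hCne hR0 hR hB₁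
  -- integrability facts for any μ in ℰ
  have hint_dual : ∀ μ : finiteFirstMoment n,
      Integrable (fun u => lfDual C g₁ u) (μ.1 : Measure (EuclideanSpace ℝ (Fin n))) := by
    intro μ
    refine Integrable.mono ((μ.2.const_mul R).add (integrable_const B₁))
      (hcont₁.aestronglyMeasurable) (Filter.Eventually.of_forall fun u => ?_)
    simp only [Pi.add_apply, Real.norm_eq_abs]
    refine (abs_lfDual_le hCne hR hB₁ u).trans ?_
    have h9 : 0 ≤ R * ‖u‖ + B₁ := add_nonneg (mul_nonneg hR0 (norm_nonneg u)) hB₁0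
    rw [abs_of_nonneg h9, mul_comm]
  have hint_inner : ∀ (μ : finiteFirstMoment n) (x : EuclideanSpace ℝ (Fin n)),
      Integrable (fun u => (⟪u, x⟫ : ℝ)) (μ.1 : Measure (EuclideanSpace ℝ (Fin n))) := by
    intro μ x
    refine Integrable.mono (μ.2.const_mul ‖x‖)
      ((continuous_id.inner continuous_const).aestronglyMeasurable)
      (Filter.Eventually.of_forall fun u => ?_)
    simp only [Real.norm_eq_abs]
    have h9 : 0 ≤ ‖x‖ * ‖u‖ := mul_nonneg (norm_nonneg x) (norm_nonneg u)
    rw [abs_of_nonneg h9, mul_comm]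
    exact abs_real_inner_le_norm u x
  have hint_id : ∀ μ : finiteFirstMoment n,
      Integrable (fun u : EuclideanSpace ℝ (Fin n) => u) (μ.1 : Measure (EuclideanSpace ℝ (Fin n))) := by
    intro μ
    exact μ.2.mono' continuous_id.aestronglyMeasurable
      (Filter.Eventually.of_forall fun u => le_refl _)
  -- E[μ] pairing
  have hE : ∀ (μ : finiteFirstMoment n) (x : EuclideanSpace ℝ (Fin n)),
      (⟪∫ u, u ∂(μ.1 : Measure (EuclideanSpace ℝ (Fin n))), x⟫ : ℝ) = ∫ u, (⟪u, x⟫ : ℝ) ∂(μ.1 : Measure (EuclideanSpace ℝ (Fin n))) := by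
    intro μ x
    rw [real_inner_comm]
    rw [← integral_inner (hint_id μ) x]
    simp_rw [real_inner_comm]
  -- h x u and its properties
  set h : EuclideanSpace ℝ (Fin n) → EuclideanSpace ℝ (Fin n) → ℝ :=
    fun x u => lfDual C g₁ u - ⟪u, x⟫ with hh
  have hint_h : ∀ (μ : finiteFirstMoment n) (x : EuclideanSpace ℝ (Fin n)),
      Integrable (h x) (μ.1 : Measure (EuclideanSpace ℝ (Fin n))) := fun μ x => (hint_dual μ).sub (hint_inner μ x)
  have hcont_h : ∀ x, Continuous (h x) :=
    fun x => hcont₁.sub (continuous_id.inner continuous_const)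
  -- truncations
  set f : EuclideanSpace ℝ (Fin n) → ℕ → EuclideanSpace ℝ (Fin n) → ℝ :=
    fun x k u => max (h x u) (-(k : ℝ)) with hf
  have habs_f : ∀ x k u, |f x k u| ≤ |h x u| := by
    intro x k u
    rcases le_or_gt (-(k : ℝ)) (h x u) with hc | hc
    · rw [hf]; simp only [max_eq_left hc]; exact le_rfl
    · rw [hf]; simp only [max_eq_right hc.le]
      have hk0 : -(k : ℝ) ≤ 0 := neg_nonpos.mpr (Nat.cast_nonneg k)
      rw [abs_of_nonpos hk0, abs_of_nonpos (by linarith)]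
      linarith
  have hint_f : ∀ (μ : finiteFirstMoment n) x k,
      Integrable (f x k) (μ.1 : Measure (EuclideanSpace ℝ (Fin n))) := by
    intro μ x k
    refine Integrable.mono (hint_h μ x) (((hcont_h x).max continuous_const).aestronglyMeasurable)
      (Filter.Eventually.of_forall fun u => ?_)
    rw [Real.norm_eq_abs, Real.norm_eq_abs]
    exact habs_f x k u
  -- key inequality: Φ(μ) ≤ ∫ f x k dμ - g₂ x + M  for every x ∈ C, k
  have hkey : ∀ (μ : finiteFirstMoment n) (x : EuclideanSpace ℝ (Fin n)), x ∈ C → ∀ k : ℕ,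
      phiFun C g₁ g₂ (μ.1 : Measure (EuclideanSpace ℝ (Fin n))) ≤ (∫ u, f x k u ∂(μ.1 : Measure (EuclideanSpace ℝ (Fin n)))) - g₂ x + M := by
    intro μ x hx k
    have h1 : lfDual C g₂ (-(∫ u, u ∂(μ.1 : Measure (EuclideanSpace ℝ (Fin n))))) ≤
        -(∫ u, (⟪u, x⟫ : ℝ) ∂(μ.1 : Measure (EuclideanSpace ℝ (Fin n)))) - g₂ x := by
      refine (lfDual_le hR hB₂ hx _).trans_eq ?_
      rw [inner_neg_left, hE μ x]
    have h2 : (∫ u, h x u ∂(μ.1 : Measure (EuclideanSpace ℝ (Fin n)))) ≤ ∫ u, f x k u ∂(μ.1 : Measure (EuclideanSpace ℝ (Fin n))) :=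
      integral_mono (hint_h μ x) (hint_f μ x k) (fun u => le_max_left _ _)
    have h3 : (∫ u, h x u ∂(μ.1 : Measure (EuclideanSpace ℝ (Fin n)))) =
        (∫ u, lfDual C g₁ u ∂(μ.1 : Measure (EuclideanSpace ℝ (Fin n)))) - ∫ u, (⟪u, x⟫ : ℝ) ∂(μ.1 : Measure (EuclideanSpace ℝ (Fin n))) :=
      integral_sub (hint_dual μ) (hint_inner μ x)
    rw [phiFun]
    have := h3 ▸ h2
    linarith
  -- now prove upper semicontinuity
  intro μ₀ y hy
  simp only at hy ⊢
  set E₀ := ∫ u, u ∂(μ₀.1 : Measure (EuclideanSpace ℝ (Fin n))) with hE₀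
  set Φ₀ := phiFun C g₁ g₂ (μ₀.1 : Measure (EuclideanSpace ℝ (Fin n))) with hΦ₀
  have hε : 0 < (y - Φ₀) / 2 := by linarith
  -- choose x ∈ C nearly attaining the inf in lfDual C g₂ (-E₀)
  obtain ⟨a, ⟨x, hxC, rfl⟩, hax⟩ :
      ∃ a ∈ (fun x => ⟪-E₀, x⟫ - g₂ x) '' C,
        a < lfDual C g₂ (-E₀) + (y - Φ₀) / 2 := by
    apply exists_lt_of_csInf_lt (hCne.image _)
    rw [← lfDual]
    linarith
  -- the value at μ₀ with this x
  have hval : (∫ u, h x u ∂(μ₀.1 : Measure (EuclideanSpace ℝ (Fin n)))) - g₂ x + M < Φ₀ + (y - Φ₀) / 2 := by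
    have h3 : (∫ u, h x u ∂(μ₀.1 : Measure (EuclideanSpace ℝ (Fin n)))) =
        (∫ u, lfDual C g₁ u ∂(μ₀.1 : Measure (EuclideanSpace ℝ (Fin n)))) - ∫ u, (⟪u, x⟫ : ℝ) ∂(μ₀.1 : Measure (EuclideanSpace ℝ (Fin n))) :=
      integral_sub (hint_dual μ₀) (hint_inner μ₀ x)
    have h4 : (⟪-E₀, x⟫ : ℝ) = -(∫ u, (⟪u, x⟫ : ℝ) ∂(μ₀.1 : Measure (EuclideanSpace ℝ (Fin n)))) := by
      rw [inner_neg_left, hE μ₀ x]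
    have hphi : Φ₀ = (∫ u, lfDual C g₁ u ∂(μ₀.1 : Measure (EuclideanSpace ℝ (Fin n)))) +
        lfDual C g₂ (-E₀) + M := rfl
    rw [h3]
    simp only at hax
    rw [h4] at hax
    linarith
  -- choose k via dominated convergence
  have htend : Filter.Tendsto (fun k : ℕ => ∫ u, f x k u ∂(μ₀.1 : Measure (EuclideanSpace ℝ (Fin n))))
      Filter.atTop (𝓝 (∫ u, h x u ∂(μ₀.1 : Measure (EuclideanSpace ℝ (Fin n))))) := by
    refine tendsto_integral_of_dominated_convergence (fun u => |h x u|)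
      (fun k => (((hcont_h x).max continuous_const)).aestronglyMeasurable)
      (hint_h μ₀ x).abs
      (fun k => Filter.Eventually.of_forall fun u => by
        rw [Real.norm_eq_abs]; exact habs_f x k u)
      (Filter.Eventually.of_forall fun u => ?_)
    obtain ⟨K, hK⟩ := exists_nat_ge (-(h x u))
    refine Filter.Tendsto.congr' ?_ tendsto_const_nhds
    filter_upwards [Filter.eventually_ge_atTop K] with k hk
    have : -(k : ℝ) ≤ h x u := by
      have : (K : ℝ) ≤ (k : ℝ) := Nat.cast_le.mpr hk
      linarith
    rw [hf]
    simp only [max_eq_left this]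
  have hklt : ∀ᶠ k : ℕ in Filter.atTop,
      (∫ u, f x k u ∂(μ₀.1 : Measure (EuclideanSpace ℝ (Fin n)))) < y + g₂ x - M := by
    refine htend.eventually_lt_const ?_
    linarith
  obtain ⟨k, hk⟩ := hklt.exists
  -- bounded continuous function
  have hbd : ∀ u, |f x k u| ≤ max (|g₁ x| + ‖x‖ * R) (k : ℝ) + 1 := by
    intro u
    have hub : h x u ≤ -g₁ x := by
      rw [hh]
      simp only
      linarith [lfDual_le hR hB₁ hxC u]
    rcases le_or_gt (-(k : ℝ)) (h x u) with hc | hc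
    · rw [hf]; simp only [max_eq_left hc]
      rw [abs_le]
      constructor
      · have := le_max_right (|g₁ x| + ‖x‖ * R) (k : ℝ)
        have h9 : 0 ≤ ‖x‖ * R := by positivity
        nlinarith [abs_nonneg (g₁ x)]
      · have := le_max_left (|g₁ x| + ‖x‖ * R) (k : ℝ)
        have := neg_abs_le (g₁ x)
        have h9 : 0 ≤ ‖x‖ * R := by positivity
        linarith
    · rw [hf]; simp only [max_eq_right hc.le]
      have hk0 : -(k : ℝ) ≤ 0 := neg_nonpos.mpr (Nat.cast_nonneg k)
      rw [abs_of_nonpos hk0]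
      have := le_max_right (|g₁ x| + ‖x‖ * R) (k : ℝ)
      linarith
  set A := max (|g₁ x| + ‖x‖ * R) (k : ℝ) + 1 with hA
  set fb : BoundedContinuousFunction (EuclideanSpace ℝ (Fin n)) ℝ :=
    BoundedContinuousFunction.mkOfBound ⟨f x k, (hcont_h x).max continuous_const⟩ (2 * A)
      (fun u v => by
        rw [Real.dist_eq]
        have h1 := hbd u
        have h2 := hbd v
        have := abs_sub_abs_le_abs_sub (f x k u) (f x k v)
        have h5 := abs_sub (f x k u) (f x k v)
        rw [abs_le]
        have h6 := (abs_le.mp h1)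
        have h7 := (abs_le.mp h2)
        refine ⟨?_, ?_⟩
        · simp only [ContinuousMap.coe_mk]; linarith
        · simp only [ContinuousMap.coe_mk]; linarith) with hfb
  have hGcont : Continuous (fun μ : finiteFirstMoment n =>
      ∫ u, fb u ∂(μ.1 : Measure (EuclideanSpace ℝ (Fin n)))) :=
    (ProbabilityMeasure.continuous_integral_boundedContinuousFunction fb).comp
      continuous_subtype_val
  have hfb_eq : ∀ (μ : finiteFirstMoment n),
      (∫ u, fb u ∂(μ.1 : Measure (EuclideanSpace ℝ (Fin n)))) = ∫ u, f x k u ∂(μ.1 : Measure (EuclideanSpace ℝ (Fin n))) := by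
    intro μ; rfl
  have hev : ∀ᶠ μ : finiteFirstMoment n in 𝓝 μ₀,
      (∫ u, fb u ∂(μ.1 : Measure (EuclideanSpace ℝ (Fin n)))) < y + g₂ x - M := by
    refine (hGcont.tendsto μ₀).eventually_lt_const ?_
    rw [hfb_eq μ₀]
    exact hk
  filter_upwards [hev] with μ hμ
  have := hkey μ x hxC k
  rw [hfb_eq μ] at hμ
  linarith
end

section
/- Let C ⊂ M_ℝ be a compact convex set with nonempty interior and g₁, g₂ : C → ℝ continuous concave functions, and Φ(μ) = ∫ g₁^∨ dμ + g₂^∨(-E[μ]) + max_C(g₁+g₂) on ℰ. Then there exist constants c₁ ≥ 0 and c₂ > 0 such that for all μ ∈ ℰ, Φ(μ) ≤ c₁ - c₂ ∫ ‖u‖ dμ(u). -/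
open MeasureTheory RealInnerProductSpace

section aux
variable {n : ℕ} {C : Set (EuclideanSpace ℝ (Fin n))} {g : EuclideanSpace ℝ (Fin n) → ℝ}
  {R M m r : ℝ} {x₀ : EuclideanSpace ℝ (Fin n)}

lemma aux_bddBelow (hR : ∀ x ∈ C, ‖x‖ ≤ R) (hM : ∀ x ∈ C, g x ≤ M)
    (u : EuclideanSpace ℝ (Fin n)) :
    BddBelow ((fun x => ⟪u, x⟫ - g x) '' C) := by
  refine ⟨-(‖u‖ * R + M), ?_⟩
  rintro y ⟨x, hx, rfl⟩
  have h1 : ⟪(-u : EuclideanSpace ℝ (Fin n)), x⟫ ≤ ‖-u‖ * ‖x‖ := real_inner_le_norm _ _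
  rw [inner_neg_left, norm_neg] at h1
  have h2 : ‖u‖ * ‖x‖ ≤ ‖u‖ * R := mul_le_mul_of_nonneg_left (hR x hx) (norm_nonneg _)
  have h3 := hM x hx
  simp only
  linarith

lemma aux_lower (hne : C.Nonempty) (hR : ∀ x ∈ C, ‖x‖ ≤ R) (hM : ∀ x ∈ C, g x ≤ M)
    (u : EuclideanSpace ℝ (Fin n)) :
    -(‖u‖ * R + M) ≤ lfDual C g u := by
  refine le_csInf (hne.image _) ?_
  rintro y ⟨x, hx, rfl⟩
  have h1 : ⟪(-u : EuclideanSpace ℝ (Fin n)), x⟫ ≤ ‖-u‖ * ‖x‖ := real_inner_le_norm _ _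
  rw [inner_neg_left, norm_neg] at h1
  have h2 : ‖u‖ * ‖x‖ ≤ ‖u‖ * R := mul_le_mul_of_nonneg_left (hR x hx) (norm_nonneg _)
  have h3 := hM x hx
  simp only
  linarith

lemma aux_upper (hball : Metric.closedBall x₀ r ⊆ C) (hr : 0 < r)
    (hR : ∀ x ∈ C, ‖x‖ ≤ R) (hM : ∀ x ∈ C, g x ≤ M) (hm : ∀ x ∈ C, m ≤ g x)
    (u : EuclideanSpace ℝ (Fin n)) :
    lfDual C g u ≤ ⟪x₀, u⟫ - r * ‖u‖ - m := by
  have hbdd := aux_bddBelow hR hM u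
  by_cases hu : u = 0
  · subst hu
    have hx₀ : x₀ ∈ C := hball (Metric.mem_closedBall_self hr.le)
    have h1 : lfDual C g 0 ≤ ⟪(0 : EuclideanSpace ℝ (Fin n)), x₀⟫ - g x₀ :=
      csInf_le hbdd ⟨x₀, hx₀, rfl⟩
    have h2 := hm x₀ hx₀
    simp only [inner_zero_left, inner_zero_right, norm_zero, mul_zero] at h1 ⊢
    linarith
  · set x : EuclideanSpace ℝ (Fin n) := x₀ - (r / ‖u‖) • u with hxdef
    have hnu : (0:ℝ) < ‖u‖ := norm_pos_iff.mpr hu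
    have hxC : x ∈ C := by
      apply hball
      rw [Metric.mem_closedBall, dist_eq_norm]
      have : x - x₀ = -((r / ‖u‖) • u) := by rw [hxdef]; abel
      rw [this, norm_neg, norm_smul, Real.norm_eq_abs,
        abs_of_nonneg (by positivity), div_mul_cancel₀ _ hnu.ne']
    have h1 : lfDual C g u ≤ ⟪u, x⟫ - g x := csInf_le hbdd ⟨x, hxC, rfl⟩
    have h2 : ⟪u, x⟫ = ⟪u, x₀⟫ - r * ‖u‖ := by
      rw [hxdef, inner_sub_right, real_inner_smul_right, real_inner_self_eq_norm_sq]
      field_simp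
    have h3 := hm x hxC
    have h4 : ⟪u, x₀⟫ = ⟪x₀, u⟫ := real_inner_comm _ _
    linarith

lemma aux_cont (hne : C.Nonempty) (hR : ∀ x ∈ C, ‖x‖ ≤ R) (hM : ∀ x ∈ C, g x ≤ M) :
    Continuous (lfDual C g) := by
  have key : ∀ u v : EuclideanSpace ℝ (Fin n),
      lfDual C g u ≤ lfDual C g v + R * ‖u - v‖ := by
    intro u v
    have : lfDual C g u - R * ‖u - v‖ ≤ lfDual C g v := by
      refine le_csInf (hne.image _) ?_
      rintro b ⟨x, hx, rfl⟩
      have h1 : lfDual C g u ≤ ⟪u, x⟫ - g x := csInf_le (aux_bddBelow hR hM u) ⟨x, hx, rfl⟩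
      have h2 : ⟪u, x⟫ - ⟪v, x⟫ = ⟪u - v, x⟫ := (inner_sub_left _ _ _).symm
      have h3 : ⟪u - v, x⟫ ≤ ‖u - v‖ * ‖x‖ := real_inner_le_norm _ _
      have h4 : ‖u - v‖ * ‖x‖ ≤ ‖u - v‖ * R :=
        mul_le_mul_of_nonneg_left (hR x hx) (norm_nonneg _)
      simp only
      nlinarith [mul_comm R ‖u - v‖]
    linarith
  have hlip : LipschitzWith (Real.toNNReal R) (lfDual C g) := by
    rw [lipschitzWith_iff_dist_le_mul]
    intro u v
    rw [Real.dist_eq, dist_eq_norm]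
    have hc : (Real.toNNReal R : ℝ) = max R 0 := Real.coe_toNNReal' R
    have h1 := key u v
    have h2 := key v u
    rw [norm_sub_rev] at h2
    have h3 : R * ‖u - v‖ ≤ max R 0 * ‖u - v‖ :=
      mul_le_mul_of_nonneg_right (le_max_left _ _) (norm_nonneg _)
    rw [abs_le, hc]
    constructor <;> linarith
  exact hlip.continuous

end aux

/-- There are constants `c₁ ≥ 0` and `c₂ > 0` with
`Φ(μ) ≤ c₁ - c₂ ∫ ‖u‖ dμ` for every probability measure `μ` with finite first moment. -/
theorem stmt7 {n : ℕ}
    (C : Set (EuclideanSpace ℝ (Fin n))) (hCcpt : IsCompact C) (hCconv : Convex ℝ C)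
    (hCint : (interior C).Nonempty)
    (g₁ g₂ : EuclideanSpace ℝ (Fin n) → ℝ)
    (hg₁ : ConcaveOn ℝ C g₁) (hg₂ : ConcaveOn ℝ C g₂)
    (hc₁ : ContinuousOn g₁ C) (hc₂ : ContinuousOn g₂ C) :
    ∃ c₁ c₂ : ℝ, 0 ≤ c₁ ∧ 0 < c₂ ∧
      ∀ μ : ProbabilityMeasure (EuclideanSpace ℝ (Fin n)),
        Integrable (fun u => ‖u‖) (μ : Measure (EuclideanSpace ℝ (Fin n))) →
        phiFun C g₁ g₂ (μ : Measure (EuclideanSpace ℝ (Fin n))) ≤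
          c₁ - c₂ * ∫ u, ‖u‖ ∂(μ : Measure (EuclideanSpace ℝ (Fin n))) := by
  -- interior point and ball
  obtain ⟨x₀, hx₀⟩ := hCint
  obtain ⟨ε, hε, hball⟩ := Metric.isOpen_iff.mp isOpen_interior x₀ hx₀
  set r : ℝ := ε / 2 with hrdef
  have hr : 0 < r := by positivity
  have hballC : Metric.closedBall x₀ r ⊆ C := by
    intro y hy
    have : y ∈ Metric.ball x₀ ε := by
      rw [Metric.mem_ball]
      rw [Metric.mem_closedBall] at hy
      linarith
    exact interior_subset (hball this)
  have hne : C.Nonempty := ⟨x₀, interior_subset hx₀⟩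
  -- bounds
  obtain ⟨R, hR⟩ := hCcpt.isBounded.exists_norm_le
  have hR0 : 0 ≤ R := le_trans (norm_nonneg x₀) (hR x₀ (interior_subset hx₀))
  obtain ⟨z₁, hz₁C, hz₁⟩ := hCcpt.exists_isMinOn hne hc₁
  obtain ⟨w₁, hw₁C, hw₁⟩ := hCcpt.exists_isMaxOn hne hc₁
  obtain ⟨z₂, hz₂C, hz₂⟩ := hCcpt.exists_isMinOn hne hc₂
  obtain ⟨w₂, hw₂C, hw₂⟩ := hCcpt.exists_isMaxOn hne hc₂
  obtain ⟨w, hwC, hw⟩ := hCcpt.exists_isMaxOn hne (hc₁.add hc₂)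
  set m₁ := g₁ z₁; set M₁ := g₁ w₁; set m₂ := g₂ z₂; set M₂ := g₂ w₂
  set S := g₁ w + g₂ w
  have hm₁ : ∀ x ∈ C, m₁ ≤ g₁ x := fun x hx => hz₁ hx
  have hM₁ : ∀ x ∈ C, g₁ x ≤ M₁ := fun x hx => hw₁ hx
  have hm₂ : ∀ x ∈ C, m₂ ≤ g₂ x := fun x hx => hz₂ hx
  have hM₂ : ∀ x ∈ C, g₂ x ≤ M₂ := fun x hx => hw₂ hx
  have hS : ∀ x ∈ C, g₁ x + g₂ x ≤ S := fun x hx => hw hx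
  refine ⟨max (S - m₁ - m₂) 0, r, le_max_right _ _, hr, ?_⟩
  intro μ hInt
  have hμ : IsProbabilityMeasure (μ : Measure (EuclideanSpace ℝ (Fin n))) := μ.2
  -- integrability
  have hIdInt : Integrable (fun u : EuclideanSpace ℝ (Fin n) => u)
      (μ : Measure (EuclideanSpace ℝ (Fin n))) :=
    hInt.mono' aestronglyMeasurable_id (Filter.Eventually.of_forall fun u => le_refl _)
  have hInnerInt : Integrable (fun u : EuclideanSpace ℝ (Fin n) => ⟪x₀, u⟫)
      (μ : Measure (EuclideanSpace ℝ (Fin n))) := (innerSL ℝ x₀).integrable_comp hIdInt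
  have hLfInt : Integrable (lfDual C g₁) (μ : Measure (EuclideanSpace ℝ (Fin n))) := by
    have hg : Integrable (fun u : EuclideanSpace ℝ (Fin n) => (R + ‖x₀‖) * ‖u‖ + (|M₁| + |m₁|))
        (μ : Measure (EuclideanSpace ℝ (Fin n))) :=
      (hInt.const_mul (R + ‖x₀‖)).add (integrable_const (|M₁| + |m₁|))
    refine Integrable.mono' hg
      ((aux_cont hne hR hM₁).aestronglyMeasurable) (Filter.Eventually.of_forall fun u => ?_)
    rw [Real.norm_eq_abs, abs_le]
    have hlow := aux_lower hne hR hM₁ u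
    have hup := aux_upper hballC hr hR hM₁ hm₁ u
    have h1 : ⟪x₀, u⟫ ≤ ‖x₀‖ * ‖u‖ := real_inner_le_norm _ _
    have h2 : 0 ≤ r * ‖u‖ := by positivity
    have h3 : ‖u‖ * R ≤ (R + ‖x₀‖) * ‖u‖ := by nlinarith [norm_nonneg u, norm_nonneg x₀]
    constructor
    · have : -(|M₁| + |m₁|) ≤ -M₁ := by
        have := abs_nonneg m₁; have := le_abs_self M₁; linarith
      nlinarith [norm_nonneg u, norm_nonneg x₀]
    · have : -m₁ ≤ |m₁| := neg_le_abs m₁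
      have h4 : ‖x₀‖ * ‖u‖ ≤ (R + ‖x₀‖) * ‖u‖ := by nlinarith [norm_nonneg u]
      have h5 : (0:ℝ) ≤ |M₁| := abs_nonneg _
      linarith
  -- the integral bound
  set E := ∫ u, u ∂(μ : Measure (EuclideanSpace ℝ (Fin n))) with hE
  set I := ∫ u, ‖u‖ ∂(μ : Measure (EuclideanSpace ℝ (Fin n))) with hI
  have hUpInt : Integrable (fun u : EuclideanSpace ℝ (Fin n) => ⟪x₀, u⟫ - r * ‖u‖ - m₁)
      (μ : Measure (EuclideanSpace ℝ (Fin n))) :=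
    (hInnerInt.sub (hInt.const_mul r)).sub (integrable_const m₁)
  have hstep1 : (∫ u, lfDual C g₁ u ∂(μ : Measure (EuclideanSpace ℝ (Fin n)))) ≤
      ⟪x₀, E⟫ - r * I - m₁ := by
    have h := integral_mono hLfInt hUpInt (fun u => aux_upper hballC hr hR hM₁ hm₁ u)
    have hA : Integrable (fun u : EuclideanSpace ℝ (Fin n) => ⟪x₀, u⟫ - r * ‖u‖)
        (μ : Measure (EuclideanSpace ℝ (Fin n))) := hInnerInt.sub (hInt.const_mul r)
    have heq : (∫ u, (⟪x₀, u⟫ - r * ‖u‖ - m₁) ∂(μ : Measure (EuclideanSpace ℝ (Fin n))))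
        = ⟪x₀, E⟫ - r * I - m₁ := by
      rw [integral_sub hA (integrable_const m₁),
        integral_sub hInnerInt (hInt.const_mul r), integral_const_mul,
        integral_inner hIdInt, integral_const]
      simp [hμ.measure_univ]
      rfl
    rwa [heq] at h
  have hstep2 : lfDual C g₂ (-E) ≤ -⟪x₀, E⟫ - m₂ := by
    have h := aux_upper hballC hr hR hM₂ hm₂ (-E)
    have h1 : ⟪x₀, -E⟫ = -⟪x₀, E⟫ := inner_neg_right _ _
    have h2 : 0 ≤ r * ‖-E‖ := by positivity
    linarith
  have hstep3 : sSup ((fun x => g₁ x + g₂ x) '' C) ≤ S := by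
    refine csSup_le (hne.image _) ?_
    rintro y ⟨x, hx, rfl⟩
    exact hS x hx
  have hfinal : phiFun C g₁ g₂ (μ : Measure (EuclideanSpace ℝ (Fin n))) ≤
      (S - m₁ - m₂) - r * I := by
    unfold phiFun
    linarith
  have : S - m₁ - m₂ ≤ max (S - m₁ - m₂) 0 := le_max_left _ _
  linarith
end

section
/- Let Φ : ℰ → ℝ be nonpositive and satisfy Φ(μ) ≤ c₁ - c₂ ∫‖u‖dμ for constants c₁ ≥ 0, c₂ > 0, and suppose Φ is upper semicontinuous on ℰ for the weak-∗ topology with respect to bounded continuous functions. If (μ_l) is a net in ℰ with Φ(μ_l) → 0, then (μ_l) has at least one cluster point in the space of probability measures on ℝⁿ, and every cluster point μ has finite first moment and satisfies Φ(μ) = 0. -/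
open MeasureTheory

open MeasureTheory Filter Topology
open scoped ENNReal NNReal

section Aux

variable {E : Type*} [TopologicalSpace E] [T2Space E] [LocallyCompactSpace E]
  [MeasurableSpace E] [BorelSpace E]

/-- Prokhorov-type existence of a cluster point for a tight net of probability measures. -/
lemma stmt13_prokhorov {ι : Type*} {F : Filter ι} [F.NeBot] (ν : ι → ProbabilityMeasure E)
    (htight : ∀ ε : ℝ≥0∞, 0 < ε →
      ∃ K : Set E, IsCompact K ∧ ∀ᶠ l in F, (ν l : Measure E) Kᶜ ≤ ε) :
    ∃ m : ProbabilityMeasure E, MapClusterPt m F ν := by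
  classical
  set 𝒰 : Ultrafilter ι := Ultrafilter.of F with h𝒰
  have h𝒰F : (𝒰 : Filter ι) ≤ F := Ultrafilter.of_le F
  -- ultrafilter limits of bounded `ℝ≥0∞`-valued functions exist
  have hex : ∀ g : ι → ℝ≥0∞, ∃ a, Tendsto g (𝒰 : Filter ι) (𝓝 a) := by
    intro g
    obtain ⟨a, -, ha⟩ := isCompact_univ.ultrafilter_le_nhds (𝒰.map g)
      (by simp [Filter.principal_univ])
    exact ⟨a, ha⟩
  -- the limit set-function
  set τ : Set E → ℝ≥0∞ := fun A => (hex fun l => (ν l : Measure E) A).choose with hτdef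
  have hτ : ∀ A : Set E, Tendsto (fun l => (ν l : Measure E) A) (𝒰 : Filter ι) (𝓝 (τ A)) :=
    fun A => (hex fun l => (ν l : Measure E) A).choose_spec
  have hτ_le_one : ∀ A, τ A ≤ 1 := fun A =>
    le_of_tendsto (hτ A) (Eventually.of_forall fun l => prob_le_one)
  have hτ_ne_top : ∀ A, τ A ≠ ∞ := fun A => ((hτ_le_one A).trans_lt ENNReal.one_lt_top).ne
  -- subadditivity and additivity of τ
  have hτ_union_le : ∀ A B : Set E, τ (A ∪ B) ≤ τ A + τ B := fun A B =>
    le_of_tendsto_of_tendsto' (hτ (A ∪ B)) ((hτ A).add (hτ B))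
      fun l => measure_union_le A B
  -- the compact set-function ("content")
  set lam : TopologicalSpace.Compacts E → ℝ≥0∞ := fun K =>
    ⨅ (U : Set E) (_ : IsOpen U) (_ : (K : Set E) ⊆ U), τ U with hlamdef
  have hlam_le : ∀ (K : TopologicalSpace.Compacts E) (U : Set E), IsOpen U →
      (K : Set E) ⊆ U → lam K ≤ τ U := by
    intro K U hU hKU
    exact iInf_le_of_le U (iInf_le_of_le hU (iInf_le _ hKU))
  have hlam_le_one : ∀ K, lam K ≤ 1 := fun K =>
    (hlam_le K Set.univ isOpen_univ (Set.subset_univ _)).trans (hτ_le_one _)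
  have hlam_ne_top : ∀ K, lam K ≠ ∞ := fun K => ((hlam_le_one K).trans_lt ENNReal.one_lt_top).ne
  have hlam_mono : ∀ K₁ K₂ : TopologicalSpace.Compacts E, (K₁ : Set E) ⊆ K₂ →
      lam K₁ ≤ lam K₂ := by
    intro K₁ K₂ h
    refine le_iInf fun U => le_iInf fun hU => le_iInf fun hKU => ?_
    exact hlam_le K₁ U hU (h.trans hKU)
  have hlam_approx : ∀ (K : TopologicalSpace.Compacts E) (ε : ℝ≥0∞), 0 < ε →
      ∃ U : Set E, IsOpen U ∧ (K : Set E) ⊆ U ∧ τ U ≤ lam K + ε := by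
    intro K ε hε
    have hlt : lam K < lam K + ε := ENNReal.lt_add_right (hlam_ne_top K) hε.ne'
    rw [hlamdef] at hlt
    simp only [iInf_lt_iff] at hlt
    obtain ⟨U, hU, hKU, hUlt⟩ := hlt
    exact ⟨U, hU, hKU, hUlt.le⟩
  have hlam_sup_le : ∀ K₁ K₂ : TopologicalSpace.Compacts E,
      lam (K₁ ⊔ K₂) ≤ lam K₁ + lam K₂ := by
    intro K₁ K₂
    refine ENNReal.le_of_forall_pos_le_add fun ε hε hfin => ?_
    obtain ⟨U₁, hU₁, hKU₁, hτ₁⟩ := hlam_approx K₁ (ε / 2) (ENNReal.half_pos (by exact_mod_cast hε.ne'))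
    obtain ⟨U₂, hU₂, hKU₂, hτ₂⟩ := hlam_approx K₂ (ε / 2) (ENNReal.half_pos (by exact_mod_cast hε.ne'))
    calc lam (K₁ ⊔ K₂) ≤ τ (U₁ ∪ U₂) :=
          hlam_le _ _ (hU₁.union hU₂) (Set.union_subset_iff.2 ⟨hKU₁.trans Set.subset_union_left,
            hKU₂.trans Set.subset_union_right⟩)
      _ ≤ τ U₁ + τ U₂ := hτ_union_le U₁ U₂
      _ ≤ (lam K₁ + ε / 2) + (lam K₂ + ε / 2) := add_le_add hτ₁ hτ₂
      _ = lam K₁ + lam K₂ + ε := by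
          rw [add_add_add_comm, ENNReal.add_halves]
  have hlam_sup_disjoint : ∀ K₁ K₂ : TopologicalSpace.Compacts E,
      Disjoint (K₁ : Set E) K₂ → lam K₁ + lam K₂ ≤ lam (K₁ ⊔ K₂) := by
    intro K₁ K₂ hdisj
    obtain ⟨V₁, V₂, hV₁, hV₂, hKV₁, hKV₂, hVdisj⟩ :=
      SeparatedNhds.of_isCompact_isCompact K₁.isCompact K₂.isCompact hdisj
    refine le_iInf fun U => le_iInf fun hU => le_iInf fun hKU => ?_
    have h₁ : lam K₁ ≤ τ (U ∩ V₁) := hlam_le _ _ (hU.inter hV₁)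
      (Set.subset_inter ((Set.subset_union_left).trans hKU) hKV₁)
    have h₂ : lam K₂ ≤ τ (U ∩ V₂) := hlam_le _ _ (hU.inter hV₂)
      (Set.subset_inter ((Set.subset_union_right).trans hKU) hKV₂)
    refine (add_le_add h₁ h₂).trans ?_
    refine le_of_tendsto_of_tendsto' ((hτ (U ∩ V₁)).add (hτ (U ∩ V₂))) (hτ U) fun l => ?_
    have hdisj' : Disjoint (U ∩ V₁) (U ∩ V₂) :=
      hVdisj.mono Set.inter_subset_right Set.inter_subset_right
    rw [← measure_union hdisj' ((hU.inter hV₂).measurableSet)]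
    exact measure_mono (Set.union_subset Set.inter_subset_left Set.inter_subset_left)
  -- build the content and the candidate limit measure
  set C : MeasureTheory.Content E :=
    { toFun := fun K => (lam K).toNNReal
      mono' := fun K₁ K₂ h => ENNReal.toNNReal_mono (hlam_ne_top K₂) (hlam_mono K₁ K₂ h)
      sup_disjoint' := by
        intro K₁ K₂ hdisj _ _
        have heq : lam (K₁ ⊔ K₂) = lam K₁ + lam K₂ :=
          le_antisymm (hlam_sup_le K₁ K₂) (hlam_sup_disjoint K₁ K₂ hdisj)
        rw [heq, ENNReal.toNNReal_add (hlam_ne_top K₁) (hlam_ne_top K₂)]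
      sup_le' := fun K₁ K₂ => by
        rw [← ENNReal.toNNReal_add (hlam_ne_top K₁) (hlam_ne_top K₂)]
        exact ENNReal.toNNReal_mono (by
          exact ENNReal.add_ne_top.2 ⟨hlam_ne_top K₁, hlam_ne_top K₂⟩)
          (hlam_sup_le K₁ K₂) } with hCdef
  have hCoe : ∀ K : TopologicalSpace.Compacts E, (C K : ℝ≥0∞) = lam K := fun K =>
    ENNReal.coe_toNNReal (hlam_ne_top K)
  set m0 : Measure E := C.measure with hm0def
  -- the measure of an open set is at most τ of that set
  have hm0_open_le : ∀ U : Set E, (hU : IsOpen U) → m0 U ≤ τ U := by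
    intro U hU
    rw [hm0def, C.measure_apply hU.measurableSet, C.outerMeasure_of_isOpen U hU]
    refine iSup₂_le fun K hKU => ?_
    rw [hCoe]
    exact hlam_le K U hU hKU
  have hm0_univ : m0 Set.univ = 1 := by
    have hle : m0 Set.univ ≤ 1 := (hm0_open_le _ isOpen_univ).trans (hτ_le_one _)
    refine le_antisymm hle ?_
    refine ENNReal.le_of_forall_pos_le_add fun ε hε _ => ?_
    by_cases hε1 : (1:ℝ≥0∞) ≤ ε
    · exact le_add_of_nonneg_of_le zero_le hε1
    push_neg at hε1
    obtain ⟨K, hK, hKev⟩ := htight ε (by exact_mod_cast hε)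
    have hKle : ∀ U : Set E, IsOpen U → K ⊆ U → (1:ℝ≥0∞) ≤ τ U + ε := by
      intro U hU hKU
      refine ge_of_tendsto ((hτ U).add tendsto_const_nhds) ?_
      filter_upwards [h𝒰F hKev] with l hl
      calc (1:ℝ≥0∞) = (ν l : Measure E) Set.univ := measure_univ.symm
        _ ≤ (ν l : Measure E) U + (ν l : Measure E) Uᶜ := measure_univ_le_add_compl U
        _ ≤ (ν l : Measure E) U + ε := by
            refine add_le_add_right (le_trans (measure_mono ?_) hl) _
            exact Set.compl_subset_compl.2 hKU
    have hlamK : (1:ℝ≥0∞) ≤ lam ⟨K, hK⟩ + ε := by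
      have h1 : (1:ℝ≥0∞) - ε ≤ lam ⟨K, hK⟩ := by
        refine le_iInf fun U => le_iInf fun hU => le_iInf fun hKU => ?_
        exact tsub_le_iff_right.2 (hKle U hU hKU)
      calc (1:ℝ≥0∞) = (1 - ε) + ε := (tsub_add_cancel_of_le hε1.le).symm
        _ ≤ lam ⟨K, hK⟩ + ε := add_le_add_left h1 _
    refine hlamK.trans (add_le_add_left ?_ _)
    rw [hm0def, C.measure_apply MeasurableSet.univ, C.outerMeasure_of_isOpen _ isOpen_univ]
    have := C.le_innerContent ⟨K, hK⟩ ⟨Set.univ, isOpen_univ⟩ (Set.subset_univ _)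
    rw [hCoe] at this
    exact this
  have hm0prob : IsProbabilityMeasure m0 := ⟨hm0_univ⟩
  set m : ProbabilityMeasure E := ⟨m0, hm0prob⟩ with hmdef
  -- weak convergence along the ultrafilter
  have hconv : Tendsto ν (𝒰 : Filter ι) (𝓝 m) := by
    refine ProbabilityMeasure.tendsto_iff_forall_integral_tendsto.mpr fun f => ?_
    refine BoundedContinuousFunction.tendsto_integral_of_forall_integral_le_liminf_integral
      (fun g g_nn => ?_) f
    have hg_nn : ∀ x, 0 ≤ g x := fun x => g_nn x
    obtain ⟨Λ, hΛ⟩ := hex fun l => ∫⁻ x, ENNReal.ofReal (g x) ∂(ν l : Measure E)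
    have hgle : ∀ x, g x ≤ ‖g‖ := fun x =>
      (le_abs_self _).trans (by rw [← Real.norm_eq_abs]; exact g.norm_coe_le_norm x)
    have hlint_le : ∀ ρ : Measure E, IsProbabilityMeasure ρ →
        ∫⁻ x, ENNReal.ofReal (g x) ∂ρ ≤ ENNReal.ofReal ‖g‖ := by
      intro ρ hρ
      calc ∫⁻ x, ENNReal.ofReal (g x) ∂ρ ≤ ∫⁻ _, ENNReal.ofReal ‖g‖ ∂ρ :=
            lintegral_mono fun x => ENNReal.ofReal_le_ofReal (hgle x)
        _ = ENNReal.ofReal ‖g‖ := by simp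
    have hΛne : Λ ≠ ∞ := by
      refine ((le_of_tendsto hΛ (Eventually.of_forall fun l =>
        hlint_le _ inferInstance)).trans_lt ENNReal.ofReal_lt_top).ne
    -- the key inequality
    have key : ∫⁻ x, ENNReal.ofReal (g x) ∂m0 ≤ Λ := by
      refine ENNReal.le_of_forall_pos_le_add fun ε hε _ => ?_
      set δ : ℝ := (ε : ℝ) with hδdef
      have hδpos : (0:ℝ) < δ := hε
      set N : ℕ := ⌈‖g‖ / δ⌉₊ with hNdef
      set B : ℕ → Set E := fun j => {x | (j:ℝ) * δ < g x} with hBdef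
      have hBopen : ∀ j, IsOpen (B j) := fun j =>
        isOpen_lt continuous_const g.continuous
      set c : E → ℕ := fun x => ⌈g x / δ⌉₊ with hcdef
      have hc_le : ∀ x, c x ≤ N := fun x =>
        Nat.ceil_le_ceil (by gcongr; exact hgle x)
      have hmem : ∀ x j, j < c x ↔ x ∈ B j := by
        intro x j
        rw [hcdef]
        simp only [Nat.lt_ceil, hBdef, Set.mem_setOf_eq, lt_div_iff₀ hδpos]
      have claim1 : ∀ x, ENNReal.ofReal (g x) ≤
          ∑ j ∈ Finset.range (N + 1), (B j).indicator (fun _ => ENNReal.ofReal δ) x := by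
        intro x
        have h1 : g x ≤ (c x : ℝ) * δ := by
          rw [← div_le_iff₀ hδpos]
          exact Nat.le_ceil _
        calc ENNReal.ofReal (g x) ≤ ENNReal.ofReal ((c x : ℝ) * δ) :=
              ENNReal.ofReal_le_ofReal h1
          _ = (c x : ℕ) * ENNReal.ofReal δ := by
              rw [ENNReal.ofReal_mul (by positivity), ENNReal.ofReal_natCast]
          _ = ∑ j ∈ Finset.range (c x), ENNReal.ofReal δ := by
              simp [Finset.sum_const, mul_comm]
          _ = ∑ j ∈ Finset.range (c x), (B j).indicator (fun _ => ENNReal.ofReal δ) x := by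
              refine Finset.sum_congr rfl fun j hj => ?_
              rw [Set.indicator_of_mem ((hmem x j).1 (Finset.mem_range.1 hj))]
          _ ≤ ∑ j ∈ Finset.range (N + 1), (B j).indicator (fun _ => ENNReal.ofReal δ) x := by
              refine Finset.sum_le_sum_of_subset ?_
              have := hc_le x; exact Finset.range_subset_range.2 (by omega)
      have claim2 : ∀ x, ∑ j ∈ Finset.range (N + 1),
          (B j).indicator (fun _ => ENNReal.ofReal δ) x ≤
          ENNReal.ofReal (g x) + ENNReal.ofReal δ := by
        intro x
        have h1 : ∑ j ∈ Finset.range (N + 1), (B j).indicator (fun _ => ENNReal.ofReal δ) x ≤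
            ∑ j ∈ Finset.range (c x), ENNReal.ofReal δ := by
          calc ∑ j ∈ Finset.range (N + 1), (B j).indicator (fun _ => ENNReal.ofReal δ) x
              ≤ ∑ j ∈ Finset.range (N + 1), if j < c x then ENNReal.ofReal δ else 0 := by
                refine Finset.sum_le_sum fun j _ => ?_
                by_cases hx : x ∈ B j
                · rw [Set.indicator_of_mem hx, if_pos ((hmem x j).2 hx)]
                · rw [Set.indicator_of_notMem hx]
                  exact zero_le
            _ = ∑ j ∈ (Finset.range (N + 1)).filter (· < c x), ENNReal.ofReal δ :=
                (Finset.sum_filter _ _).symm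
            _ ≤ ∑ j ∈ Finset.range (c x), ENNReal.ofReal δ := by
                refine Finset.sum_le_sum_of_subset fun j hj => ?_
                rw [Finset.mem_filter] at hj
                exact Finset.mem_range.2 hj.2
        refine h1.trans ?_
        have h2 : (c x : ℝ) * δ ≤ g x + δ := by
          have := Nat.ceil_lt_add_one (div_nonneg (hg_nn x) hδpos.le)
          calc (c x : ℝ) * δ ≤ (g x / δ + 1) * δ := by
                refine mul_le_mul_of_nonneg_right ?_ hδpos.le
                exact this.le
            _ = g x + δ := by field_simp
        calc ∑ j ∈ Finset.range (c x), ENNReal.ofReal δ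
            = (c x : ℕ) * ENNReal.ofReal δ := by simp [Finset.sum_const, mul_comm]
          _ = ENNReal.ofReal ((c x : ℝ) * δ) := by
              rw [ENNReal.ofReal_mul (by positivity), ENNReal.ofReal_natCast]
          _ ≤ ENNReal.ofReal (g x + δ) := ENNReal.ofReal_le_ofReal h2
          _ = ENNReal.ofReal (g x) + ENNReal.ofReal δ :=
              ENNReal.ofReal_add (hg_nn x) hδpos.le
      have hmeas_ind : ∀ j, Measurable ((B j).indicator (fun _ => ENNReal.ofReal δ)) :=
        fun j => measurable_const.indicator (hBopen j).measurableSet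
      have hlint_sum : ∀ ρ : Measure E, ∫⁻ x, ∑ j ∈ Finset.range (N + 1),
          (B j).indicator (fun _ => ENNReal.ofReal δ) x ∂ρ =
          ∑ j ∈ Finset.range (N + 1), ENNReal.ofReal δ * ρ (B j) := by
        intro ρ
        rw [lintegral_finset_sum _ fun j _ => hmeas_ind j]
        refine Finset.sum_congr rfl fun j _ => ?_
        rw [lintegral_indicator_const (hBopen j).measurableSet]
      have hstep1 : ∫⁻ x, ENNReal.ofReal (g x) ∂m0 ≤
          ∑ j ∈ Finset.range (N + 1), ENNReal.ofReal δ * τ (B j) := by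
        calc ∫⁻ x, ENNReal.ofReal (g x) ∂m0
            ≤ ∫⁻ x, ∑ j ∈ Finset.range (N + 1),
              (B j).indicator (fun _ => ENNReal.ofReal δ) x ∂m0 := lintegral_mono claim1
          _ = ∑ j ∈ Finset.range (N + 1), ENNReal.ofReal δ * m0 (B j) := hlint_sum m0
          _ ≤ ∑ j ∈ Finset.range (N + 1), ENNReal.ofReal δ * τ (B j) :=
              Finset.sum_le_sum fun j _ =>
                mul_le_mul_right (hm0_open_le (B j) (hBopen j)) _
      have hstep3 : Tendsto (fun l => ∑ j ∈ Finset.range (N + 1),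
          ENNReal.ofReal δ * (ν l : Measure E) (B j)) (𝒰 : Filter ι)
          (𝓝 (∑ j ∈ Finset.range (N + 1), ENNReal.ofReal δ * τ (B j))) := by
        refine tendsto_finset_sum _ fun j _ => ?_
        exact ENNReal.Tendsto.const_mul (hτ (B j)) (Or.inr ENNReal.ofReal_ne_top)
      have hstep4 : ∀ l, ∑ j ∈ Finset.range (N + 1),
          ENNReal.ofReal δ * (ν l : Measure E) (B j) ≤
          (∫⁻ x, ENNReal.ofReal (g x) ∂(ν l : Measure E)) + ENNReal.ofReal δ := by
        intro l
        calc ∑ j ∈ Finset.range (N + 1), ENNReal.ofReal δ * (ν l : Measure E) (B j)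
            = ∫⁻ x, ∑ j ∈ Finset.range (N + 1),
              (B j).indicator (fun _ => ENNReal.ofReal δ) x ∂(ν l : Measure E) :=
              (hlint_sum _).symm
          _ ≤ ∫⁻ x, (ENNReal.ofReal (g x) + ENNReal.ofReal δ) ∂(ν l : Measure E) :=
              lintegral_mono claim2
          _ = (∫⁻ x, ENNReal.ofReal (g x) ∂(ν l : Measure E)) + ENNReal.ofReal δ := by
              rw [lintegral_add_right _ measurable_const, lintegral_const, measure_univ, mul_one]
      have hsum_le : ∑ j ∈ Finset.range (N + 1), ENNReal.ofReal δ * τ (B j) ≤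
          Λ + ENNReal.ofReal δ :=
        le_of_tendsto_of_tendsto' hstep3 (hΛ.add tendsto_const_nhds) hstep4
      calc ∫⁻ x, ENNReal.ofReal (g x) ∂m0
          ≤ Λ + ENNReal.ofReal δ := hstep1.trans hsum_le
        _ = Λ + ε := by rw [hδdef, ENNReal.ofReal_coe_nnreal]
    -- convert back to real integrals
    have hint_eq : ∀ ρ : Measure E, IsProbabilityMeasure ρ → ∫ x, g x ∂ρ =
        (∫⁻ x, ENNReal.ofReal (g x) ∂ρ).toReal := by
      intro ρ _
      rw [integral_eq_lintegral_of_nonneg_ae (Eventually.of_forall hg_nn)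
        g.continuous.measurable.aestronglyMeasurable]
    have hreal : Tendsto (fun l => ∫ x, g x ∂(ν l : Measure E)) (𝒰 : Filter ι)
        (𝓝 Λ.toReal) := by
      have := (ENNReal.tendsto_toReal hΛne).comp hΛ
      refine this.congr fun l => ?_
      rw [hint_eq _ inferInstance]
      rfl
    have hliminf : liminf (fun l => ∫ x, g x ∂(ν l : Measure E)) (𝒰 : Filter ι) = Λ.toReal :=
      hreal.liminf_eq
    rw [hliminf, hint_eq (m : Measure E) inferInstance]
    exact ENNReal.toReal_mono hΛne key
  refine ⟨m, ?_⟩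
  have hne : (𝓝 m ⊓ Filter.map ν F).NeBot :=
    Filter.NeBot.mono Filter.map_neBot (le_inf hconv (Filter.map_mono h𝒰F))
  exact hne

/-- Markov inequality gives tightness from a uniform first-moment bound. -/
lemma stmt13_tight {E : Type*} [NormedAddCommGroup E] [ProperSpace E] [MeasurableSpace E]
    [OpensMeasurableSpace E] {ι : Type*} {F : Filter ι} (ν : ι → ProbabilityMeasure E)
    (C : ℝ≥0∞) (hC : C ≠ ∞)
    (hev : ∀ᶠ l in F, ∫⁻ x, ENNReal.ofReal ‖x‖ ∂(ν l : Measure E) ≤ C) :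
    ∀ ε : ℝ≥0∞, 0 < ε →
      ∃ K : Set E, IsCompact K ∧ ∀ᶠ l in F, (ν l : Measure E) Kᶜ ≤ ε := by
  intro ε hε
  set r : ℝ≥0∞ := min 1 ε with hrdef
  have hr0 : r ≠ 0 := by
    simp only [hrdef, ne_eq, min_eq_iff, not_or]
    constructor <;> rintro ⟨h, -⟩
    · exact one_ne_zero h
    · exact hε.ne' h
  have hrε : r ≤ ε := min_le_right _ _
  have hrtop : r ≠ ∞ := (min_le_left _ _).trans_lt ENNReal.one_lt_top |>.ne
  have hCr_ne_top : C / r ≠ ∞ := (ENNReal.div_lt_top hC hr0).ne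
  set R : ℝ := (C / r).toReal + 1 with hRdef
  have hRpos : 0 < R := by positivity
  have hCrR : C / r ≤ ENNReal.ofReal R := by
    rw [← ENNReal.ofReal_toReal hCr_ne_top]
    exact ENNReal.ofReal_le_ofReal (by simp [hRdef])
  refine ⟨Metric.closedBall 0 R, isCompact_closedBall 0 R, ?_⟩
  filter_upwards [hev] with l hl
  have hsubset : (Metric.closedBall (0:E) R)ᶜ ⊆
      {x : E | ENNReal.ofReal R ≤ ENNReal.ofReal ‖x‖} := by
    intro x hx
    simp only [Set.mem_compl_iff, Metric.mem_closedBall, dist_zero_right, not_le] at hx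
    exact ENNReal.ofReal_le_ofReal hx.le
  calc (ν l : Measure E) (Metric.closedBall (0:E) R)ᶜ
      ≤ (ν l : Measure E) {x : E | ENNReal.ofReal R ≤ ENNReal.ofReal ‖x‖} :=
        measure_mono hsubset
    _ ≤ (∫⁻ x, ENNReal.ofReal ‖x‖ ∂(ν l : Measure E)) / ENNReal.ofReal R := by
        refine meas_ge_le_lintegral_div ?_ ?_ ?_
        · exact (measurable_norm.ennreal_ofReal).aemeasurable
        · simpa using (ENNReal.ofReal_pos.2 hRpos).ne'
        · exact ENNReal.ofReal_ne_top
    _ ≤ C / ENNReal.ofReal R := by gcongr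
    _ ≤ r := by
        rw [ENNReal.div_le_iff_le_mul (Or.inl (ENNReal.ofReal_pos.2 hRpos).ne')
          (Or.inl ENNReal.ofReal_ne_top)]
        calc C = r * (C / r) := (ENNReal.mul_div_cancel hr0 hrtop).symm
          _ ≤ r * ENNReal.ofReal R := mul_le_mul_right hCrR _
          _ = ENNReal.ofReal R * r := mul_comm _ _
          _ = r * ENNReal.ofReal R := mul_comm _ _
    _ ≤ ε := hrε

/-- Truncated norm as a bounded continuous `ℝ≥0`-valued function. -/
noncomputable def stmt13TruncNorm (E : Type*) [SeminormedAddGroup E] (M : ℝ≥0) :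
    BoundedContinuousFunction E ℝ≥0 where
  toFun := fun x => min ‖x‖₊ M
  continuous_toFun := continuous_nnnorm.min continuous_const
  map_bounded' := by
    refine ⟨M, fun x y => ?_⟩
    rw [NNReal.dist_eq]
    rw [abs_sub_le_iff]
    constructor
    · calc ((min ‖x‖₊ M : ℝ≥0) : ℝ) - ((min ‖y‖₊ M : ℝ≥0) : ℝ) ≤ (min ‖x‖₊ M : ℝ≥0) := by
            simp
      _ ≤ M := by exact_mod_cast min_le_right _ _
    · calc ((min ‖y‖₊ M : ℝ≥0) : ℝ) - ((min ‖x‖₊ M : ℝ≥0) : ℝ) ≤ (min ‖y‖₊ M : ℝ≥0) := by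
            simp
      _ ≤ M := by exact_mod_cast min_le_right _ _

lemma stmt13TruncNorm_apply {E : Type*} [SeminormedAddGroup E] (M : ℝ≥0) (x : E) :
    stmt13TruncNorm E M x = min ‖x‖₊ M := rfl

end Aux


/-- Let `Φ` be a nonpositive upper semicontinuous functional on the space
`ℰ` of probability measures on `ℝⁿ` with finite first moment, satisfying
`Φ(μ) ≤ c₁ - c₂ ∫‖u‖dμ` with `c₁ ≥ 0`, `c₂ > 0`. If `(μ_l)` is a net in `ℰ` with
`Φ(μ_l) → 0`, then `(μ_l)` has a cluster point in the space of probability measures,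
and every cluster point has finite first moment and satisfies `Φ(μ) = 0`. -/
theorem stmt13 {n : ℕ}
    (Φ : {μ : ProbabilityMeasure (EuclideanSpace ℝ (Fin n)) //
      Integrable (fun u => ‖u‖) (μ : Measure (EuclideanSpace ℝ (Fin n)))} → ℝ)
    (hnonpos : ∀ μ, Φ μ ≤ 0)
    (c₁ c₂ : ℝ) (hc₁ : 0 ≤ c₁) (hc₂ : 0 < c₂)
    (hbound : ∀ μ, Φ μ ≤ c₁ - c₂ * ∫ u, ‖u‖ ∂(μ.1 : Measure (EuclideanSpace ℝ (Fin n))))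
    (husc : UpperSemicontinuous Φ)
    {ι : Type*} [Preorder ι] [Nonempty ι] (hdir : IsDirected ι (· ≤ ·))
    (μ : ι → {μ : ProbabilityMeasure (EuclideanSpace ℝ (Fin n)) //
      Integrable (fun u => ‖u‖) (μ : Measure (EuclideanSpace ℝ (Fin n)))})
    (hlim : Filter.Tendsto (fun l => Φ (μ l)) Filter.atTop (nhds 0)) :
    (∃ ν : ProbabilityMeasure (EuclideanSpace ℝ (Fin n)),
      MapClusterPt ν Filter.atTop (fun l => (μ l).1)) ∧
    ∀ ν : ProbabilityMeasure (EuclideanSpace ℝ (Fin n)),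
      MapClusterPt ν Filter.atTop (fun l => (μ l).1) →
      ∃ h : Integrable (fun u => ‖u‖) (ν : Measure (EuclideanSpace ℝ (Fin n))),
        Φ ⟨ν, h⟩ = 0 := by
  classical
  haveI : (Filter.atTop : Filter ι).NeBot := Filter.atTop_neBot_iff.2 ⟨‹Nonempty ι›, hdir⟩
  set E := EuclideanSpace ℝ (Fin n) with hEdef
  set K₀ : ℝ := (c₁ + 1) / c₂ with hK₀def
  set C : ℝ≥0∞ := ENNReal.ofReal K₀ with hCdef
  -- eventual uniform first moment bound
  have hev : ∀ᶠ l in Filter.atTop,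
      ∫⁻ x, ENNReal.ofReal ‖x‖ ∂((μ l).1 : Measure E) ≤ C := by
    have h1 : ∀ᶠ l in Filter.atTop, -1 < Φ (μ l) :=
      hlim.eventually (eventually_gt_nhds (by norm_num))
    filter_upwards [h1] with l hl
    have h2 := hbound (μ l)
    have hint : ∫ x, ‖x‖ ∂((μ l).1 : Measure E) ≤ K₀ := by
      rw [hK₀def, le_div_iff₀ hc₂]
      nlinarith
    rw [← ofReal_integral_eq_lintegral_ofReal (μ l).2
      (Eventually.of_forall fun x => norm_nonneg x)]
    exact ENNReal.ofReal_le_ofReal hint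
  have htight := stmt13_tight (fun l => (μ l).1) C ENNReal.ofReal_ne_top hev
  obtain ⟨m, hm⟩ := stmt13_prokhorov (fun l => (μ l).1) htight
  refine ⟨⟨m, hm⟩, ?_⟩
  intro ν hν
  -- every cluster point has a finite first moment
  set T : Set (ProbabilityMeasure E) :=
    {ρ | ∫⁻ x, ENNReal.ofReal ‖x‖ ∂(ρ : Measure E) ≤ C} with hTdef
  have hTmem : T ∈ Filter.map (fun l => (μ l).1) Filter.atTop := by
    rw [Filter.mem_map]
    exact hev.mono fun l hl => hl
  have hTcl : ν ∈ closure T :=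
    mem_closure_iff_clusterPt.2 (ClusterPt.mono hν (Filter.le_principal_iff.2 hTmem))
  -- closed truncated-moment sets
  have hTsub : ∀ M : ℝ≥0, T ⊆
      {ρ : ProbabilityMeasure E |
        ρ.toFiniteMeasure.testAgainstNN (stmt13TruncNorm E M) ≤ C.toNNReal} := by
    intro M ρ hρ
    have hle : ∫⁻ x, (stmt13TruncNorm E M x : ℝ≥0∞) ∂(ρ : Measure E) ≤ C := by
      refine le_trans (lintegral_mono fun x => ?_) hρ
      rw [stmt13TruncNorm_apply, ofReal_norm, enorm_eq_nnnorm]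
      exact ENNReal.coe_le_coe.2 inf_le_left
    have : ρ.toFiniteMeasure.testAgainstNN (stmt13TruncNorm E M) =
        (∫⁻ x, (stmt13TruncNorm E M x : ℝ≥0∞) ∂(ρ : Measure E)).toNNReal := by
      simp [FiniteMeasure.testAgainstNN, ρ.toMeasure_comp_toFiniteMeasure_eq_toMeasure]
    rw [Set.mem_setOf_eq, this]
    exact ENNReal.toNNReal_mono ENNReal.ofReal_ne_top hle
  have hScl : ∀ M : ℝ≥0, IsClosed
      {ρ : ProbabilityMeasure E |
        ρ.toFiniteMeasure.testAgainstNN (stmt13TruncNorm E M) ≤ C.toNNReal} := fun M =>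
    isClosed_le (ProbabilityMeasure.continuous_testAgainstNN_eval _) continuous_const
  have hνM : ∀ M : ℝ≥0, ∫⁻ x, (stmt13TruncNorm E M x : ℝ≥0∞) ∂(ν : Measure E) ≤ C := by
    intro M
    have hmem : ν ∈ {ρ : ProbabilityMeasure E |
        ρ.toFiniteMeasure.testAgainstNN (stmt13TruncNorm E M) ≤ C.toNNReal} :=
      closure_minimal (hTsub M) (hScl M) hTcl
    have hfin : ∫⁻ x, (stmt13TruncNorm E M x : ℝ≥0∞) ∂(ν : Measure E) ≠ ∞ := by
      refine ((lintegral_mono (g := fun _ : E => (M : ℝ≥0∞)) fun x => ?_).trans_lt ?_).ne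
      · exact ENNReal.coe_le_coe.2 inf_le_right
      · simp [lintegral_const, measure_univ]
    have h1 : ν.toFiniteMeasure.testAgainstNN (stmt13TruncNorm E M) =
        (∫⁻ x, (stmt13TruncNorm E M x : ℝ≥0∞) ∂(ν : Measure E)).toNNReal := by
      simp [FiniteMeasure.testAgainstNN, ν.toMeasure_comp_toFiniteMeasure_eq_toMeasure]
    rw [Set.mem_setOf_eq, h1] at hmem
    calc ∫⁻ x, (stmt13TruncNorm E M x : ℝ≥0∞) ∂(ν : Measure E)
        = ((∫⁻ x, (stmt13TruncNorm E M x : ℝ≥0∞) ∂(ν : Measure E)).toNNReal : ℝ≥0∞) :=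
          (ENNReal.coe_toNNReal hfin).symm
      _ ≤ (C.toNNReal : ℝ≥0∞) := ENNReal.coe_le_coe.2 hmem
      _ = C := ENNReal.coe_toNNReal ENNReal.ofReal_ne_top
  -- monotone convergence: finite first moment
  have hsup : ∫⁻ x, ENNReal.ofReal ‖x‖ ∂(ν : Measure E) ≤ C := by
    have hmono : Monotone fun (k : ℕ) => fun x : E =>
        ((stmt13TruncNorm E k x : ℝ≥0) : ℝ≥0∞) := by
      intro k k' hk x
      simp only [stmt13TruncNorm_apply]
      exact_mod_cast min_le_min le_rfl (by exact_mod_cast Nat.cast_le.2 hk)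
    have heq : ∀ x : E, (⨆ k : ℕ, ((stmt13TruncNorm E k x : ℝ≥0) : ℝ≥0∞)) =
        ENNReal.ofReal ‖x‖ := by
      intro x
      rw [ofReal_norm, enorm_eq_nnnorm]
      refine le_antisymm (iSup_le fun k => ?_) ?_
      · simp only [stmt13TruncNorm_apply, ENNReal.coe_min, ofReal_norm, enorm_eq_nnnorm]
        exact min_le_left _ _
      · obtain ⟨k, hk⟩ := ENNReal.exists_nat_gt
          (show ((‖x‖₊ : ℝ≥0∞)) ≠ ∞ from ENNReal.coe_ne_top)
        refine le_iSup_of_le k ?_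
        simp only [stmt13TruncNorm_apply, ENNReal.coe_min, ofReal_norm, enorm_eq_nnnorm]
        exact le_min le_rfl (by exact_mod_cast hk.le)
    have hmeas : ∀ k : ℕ, Measurable fun x : E =>
        ((stmt13TruncNorm E k x : ℝ≥0) : ℝ≥0∞) := fun k =>
      ((continuous_nnnorm.min continuous_const).measurable).coe_nnreal_ennreal
    calc ∫⁻ x, ENNReal.ofReal ‖x‖ ∂(ν : Measure E)
        = ∫⁻ x, ⨆ k : ℕ, ((stmt13TruncNorm E k x : ℝ≥0) : ℝ≥0∞) ∂(ν : Measure E) := by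
          refine lintegral_congr fun x => (heq x).symm
      _ = ⨆ k : ℕ, ∫⁻ x, ((stmt13TruncNorm E k x : ℝ≥0) : ℝ≥0∞) ∂(ν : Measure E) :=
          lintegral_iSup hmeas fun k k' hk => fun x => hmono hk x
      _ ≤ C := iSup_le fun k => hνM k
  have hint : Integrable (fun u : E => ‖u‖) (ν : Measure E) := by
    refine ⟨continuous_norm.aestronglyMeasurable, ?_⟩
    rw [hasFiniteIntegral_iff_ofReal (Eventually.of_forall fun x => norm_nonneg x)]
    exact hsup.trans_lt ENNReal.ofReal_lt_top
  refine ⟨hint, ?_⟩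
  -- upper semicontinuity forces the value 0 at every cluster point
  by_contra hΦν
  have hΦν' : Φ ⟨ν, hint⟩ < 0 := lt_of_le_of_ne (hnonpos _) hΦν
  set y : ℝ := Φ ⟨ν, hint⟩ / 2 with hydef
  have hy0 : y < 0 := by simp [hydef]; linarith
  have hylt : Φ ⟨ν, hint⟩ < y := by simp [hydef]; linarith
  have hU : ∀ᶠ x in nhds (⟨ν, hint⟩ : {μ : ProbabilityMeasure E //
      Integrable (fun u => ‖u‖) (μ : Measure E)}), Φ x < y := husc _ y hylt
  -- the cluster point lifts to the subtype
  have hclX : ClusterPt (⟨ν, hint⟩ : {μ : ProbabilityMeasure E //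
      Integrable (fun u => ‖u‖) (μ : Measure E)}) (Filter.map μ Filter.atTop) := by
    have hcomap : nhds (⟨ν, hint⟩ : {μ : ProbabilityMeasure E //
        Integrable (fun u => ‖u‖) (μ : Measure E)}) =
        Filter.comap Subtype.val (nhds ν) := nhds_induced _ _
    have hmm : Filter.map (fun l => (μ l).1) Filter.atTop =
        Filter.map Subtype.val (Filter.map μ Filter.atTop) := by
      rw [Filter.map_map]; rfl
    have hH : (nhds ν ⊓ Filter.map (fun l => (μ l).1) Filter.atTop).NeBot := hν
    show (nhds (⟨ν, hint⟩ : {μ : ProbabilityMeasure E //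
      Integrable (fun u => ‖u‖) (μ : Measure E)}) ⊓ Filter.map μ Filter.atTop).NeBot
    rw [hcomap, ← Filter.comap_map Subtype.val_injective
      (f := Filter.map μ Filter.atTop), ← Filter.comap_inf, ← hmm]
    rw [Filter.comap_neBot_iff]
    intro t ht
    have hrange : Set.range (fun l => (μ l).1) ∈
        nhds ν ⊓ Filter.map (fun l => (μ l).1) Filter.atTop :=
      Filter.mem_inf_of_right (Filter.range_mem_map)
    obtain ⟨x, hxt, l, hxl⟩ := hH.nonempty_of_mem (Filter.inter_mem ht hrange)
    exact ⟨μ l, by rwa [← hxl] at hxt⟩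
  -- derive the contradiction
  have hB : {x : {μ : ProbabilityMeasure E //
      Integrable (fun u => ‖u‖) (μ : Measure E)} | y < Φ x} ∈
      Filter.map μ Filter.atTop := by
    rw [Filter.mem_map]
    exact hlim.eventually (eventually_gt_nhds hy0)
  obtain ⟨x, hx1, hx2⟩ := hclX.nonempty_of_mem
    (Filter.inter_mem (Filter.mem_inf_of_left hU) (Filter.mem_inf_of_right hB))
  simp only [Set.mem_setOf_eq] at hx1 hx2
  exact absurd (hx1.trans hx2) (lt_irrefl _)
end

section
/- Let μ be a Borel probability measure on ℝⁿ with finite first moment, A ⊂ ℝⁿ a convex set with supp(μ) ⊆ A, and F a face of A. If the expected value E[μ] = ∫ u dμ(u) lies in F, then supp(μ) ⊆ F. -/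
set_option maxHeartbeats 1000000

open MeasureTheory

namespace Stmt18Aux

variable {n : ℕ}

def spt (μ : Measure (EuclideanSpace ℝ (Fin n))) : Set (EuclideanSpace ℝ (Fin n)) :=
  {x | ∀ U : Set (EuclideanSpace ℝ (Fin n)), IsOpen U → x ∈ U → 0 < μ U}

lemma measure_compl_spt (μ : Measure (EuclideanSpace ℝ (Fin n))) : μ (spt μ)ᶜ = 0 := by
  have hsub : (spt μ)ᶜ ⊆ ⋃₀ {U : Set (EuclideanSpace ℝ (Fin n)) | IsOpen U ∧ μ U = 0} := by
    intro x hx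
    simp only [spt, Set.mem_compl_iff, Set.mem_setOf_eq, not_forall] at hx
    obtain ⟨U, hU, hxU, hμU⟩ := hx
    exact ⟨U, ⟨hU, by simpa [pos_iff_ne_zero] using hμU⟩, hxU⟩
  obtain ⟨T, hTc, hTsub, hTU⟩ :=
    TopologicalSpace.isOpen_sUnion_countable
      {U : Set (EuclideanSpace ℝ (Fin n)) | IsOpen U ∧ μ U = 0} (fun U hU => hU.1)
  refine measure_mono_null (hTU ▸ hsub) ?_
  exact (measure_sUnion_null_iff hTc).2 fun U hU => (hTsub hU).2

lemma exists_support_functional {A : Set (EuclideanSpace ℝ (Fin n))} (hA : Convex ℝ A)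
    {b x₀ : EuclideanSpace ℝ (Fin n)} (hb : b ∈ A) (hx₀ : x₀ ∈ A)
    (h : ∀ ε : ℝ, 0 < ε → b + ε • (b - x₀) ∉ A) :
    ∃ g : EuclideanSpace ℝ (Fin n) →L[ℝ] ℝ,
      (∀ a ∈ A, g a ≤ g b) ∧ ∃ a ∈ A, g a < g b := by
  classical
  set V : Submodule ℝ (EuclideanSpace ℝ (Fin n)) :=
    Submodule.span ℝ ((fun a => a - b) '' A) with hVdef
  have hmem : ∀ a ∈ A, a - b ∈ V := fun a ha => Submodule.subset_span ⟨a, ha, rfl⟩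
  set S' : Set V := {w | b + (w : EuclideanSpace ℝ (Fin n)) ∈ A} with hS'def
  have hS'conv : Convex ℝ S' := by
    intro w1 h1 w2 h2 t s ht hs hts
    show b + ((t • w1 + s • w2 : V) : EuclideanSpace ℝ (Fin n)) ∈ A
    have hcomb : t • (b + (w1 : EuclideanSpace ℝ (Fin n))) + s • (b + (w2 : EuclideanSpace ℝ (Fin n)))
        = b + ((t • w1 + s • w2 : V) : EuclideanSpace ℝ (Fin n)) := by
      push_cast
      calc t • (b + (w1 : EuclideanSpace ℝ (Fin n))) + s • (b + (w2 : EuclideanSpace ℝ (Fin n)))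
          = (t + s) • b + (t • (w1 : EuclideanSpace ℝ (Fin n)) + s • (w2 : EuclideanSpace ℝ (Fin n))) := by
            module
        _ = b + (t • (w1 : EuclideanSpace ℝ (Fin n)) + s • (w2 : EuclideanSpace ℝ (Fin n))) := by
            rw [hts, one_smul]
    exact hcomb ▸ hA h1 h2 ht hs hts
  have h0 : (0 : V) ∈ S' := by simpa [hS'def] using hb
  have hST : (V.subtype) '' S' = (fun a => a - b) '' A := by
    ext v
    constructor
    · rintro ⟨w, hw, rfl⟩
      refine ⟨b + (w : EuclideanSpace ℝ (Fin n)), hw, ?_⟩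
      show b + (w : EuclideanSpace ℝ (Fin n)) - b = V.subtype w
      simp
    · rintro ⟨a, ha, rfl⟩
      refine ⟨⟨a - b, hmem a ha⟩, ?_, rfl⟩
      show b + (a - b) ∈ A
      simpa using ha
  have hspan : Submodule.span ℝ S' = ⊤ := by
    apply Submodule.map_injective_of_injective V.injective_subtype
    rw [Submodule.map_span, hST, Submodule.map_top, Submodule.range_subtype]
  have haff : affineSpan ℝ S' = ⊤ := by
    rw [AffineSubspace.affineSpan_eq_top_iff_vectorSpan_eq_top_of_nonempty ℝ ↥V ↥V ⟨0, h0⟩]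
    refine top_unique ?_
    rw [← hspan]
    refine Submodule.span_le.2 fun w hw => ?_
    simpa using vsub_mem_vectorSpan ℝ hw h0
  have hint' : (interior S').Nonempty :=
    hS'conv.interior_nonempty_iff_affineSpan_eq_top.mpr haff
  have hw₀V : x₀ - b ∈ V := hmem x₀ hx₀
  set w₀ : V := ⟨x₀ - b, hw₀V⟩ with hw₀def
  have h0ni : (0 : V) ∉ interior S' := by
    intro h0i
    have hcont : Filter.Tendsto (fun t : ℝ => t • w₀) (nhds 0) (nhds (0 : V)) := by
      have hco : Continuous fun t : ℝ => t • w₀ := continuous_id.smul continuous_const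
      simpa using hco.tendsto 0
    have hev : ∀ᶠ t : ℝ in nhds 0, t • w₀ ∈ interior S' :=
      hcont.eventually (isOpen_interior.mem_nhds h0i)
    have hev' : ∀ᶠ t : ℝ in nhdsWithin 0 (Set.Iio 0), t • w₀ ∈ interior S' :=
      nhdsWithin_le_nhds hev
    obtain ⟨t, htmem, htneg⟩ := (hev'.and eventually_mem_nhdsWithin).exists
    have htS : t • w₀ ∈ S' := interior_subset htmem
    have : b + (-t) • (b - x₀) ∈ A := by
      have : b + ((t • w₀ : V) : EuclideanSpace ℝ (Fin n)) ∈ A := htS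
      have hcalc : b + ((t • w₀ : V) : EuclideanSpace ℝ (Fin n)) = b + (-t) • (b - x₀) := by
        push_cast [hw₀def]
        module
      rwa [hcalc] at this
    exact h (-t) (by simpa using htneg) this
  obtain ⟨f, hf⟩ := geometric_hahn_banach_open_point (hS'conv.interior) isOpen_interior h0ni
  have hf0 : ∀ w ∈ interior S', f w < 0 := by
    intro w hw
    simpa using hf w hw
  obtain ⟨w₁, hw₁⟩ := hint'
  have hle : ∀ w ∈ S', f w ≤ 0 := by
    intro w hw
    have key : ∀ t : ℝ, 0 < t → t < 1 → f (t • w₁ + (1 - t) • w) < 0 := by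
      intro t ht ht1
      exact hf0 _ (hS'conv.combo_interior_self_mem_interior hw₁ hw ht (by linarith) (by ring))
    have hc : Filter.Tendsto (fun t : ℝ => f (t • w₁ + (1 - t) • w))
        (nhdsWithin 0 (Set.Ioi 0)) (nhds (f w)) := by
      have hcont : Continuous fun t : ℝ => f (t • w₁ + (1 - t) • w) :=
        f.continuous.comp ((continuous_id.smul continuous_const).add
          ((continuous_const.sub continuous_id).smul continuous_const))
      have := hcont.tendsto 0
      simp only [zero_smul, sub_zero, one_smul, zero_add] at this
      exact this.mono_left nhdsWithin_le_nhds
    refine le_of_tendsto hc ?_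
    have h1 : ∀ᶠ t : ℝ in nhdsWithin 0 (Set.Ioi 0), t < 1 :=
      nhdsWithin_le_nhds (eventually_lt_nhds zero_lt_one)
    filter_upwards [self_mem_nhdsWithin, h1] with t ht ht1
    exact (key t ht ht1).le
  haveI : CompleteSpace V := FiniteDimensional.complete ℝ V
  set g : EuclideanSpace ℝ (Fin n) →L[ℝ] ℝ := f.comp (V.orthogonalProjectionOnto) with hgdef
  have hgV : ∀ w : V, g (w : EuclideanSpace ℝ (Fin n)) = f w := by
    intro w
    simp [hgdef, Submodule.orthogonalProjectionOnto_mem_subspace_eq_self]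
  refine ⟨g, ?_, ?_⟩
  · intro a ha
    have : g a - g b = g (a - b) := (map_sub g a b).symm
    have h2 : g (a - b) = f ⟨a - b, hmem a ha⟩ := hgV ⟨a - b, hmem a ha⟩
    have h3 : f ⟨a - b, hmem a ha⟩ ≤ 0 := by
      apply hle
      show b + (a - b) ∈ A
      simpa using ha
    linarith [this, h2, h3]
  · have hw₁S : w₁ ∈ S' := interior_subset hw₁
    refine ⟨b + (w₁ : EuclideanSpace ℝ (Fin n)), hw₁S, ?_⟩
    have h4 : g (b + (w₁ : EuclideanSpace ℝ (Fin n))) = g b + g (w₁ : EuclideanSpace ℝ (Fin n)) :=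
      g.map_add _ _
    have h5 : g (w₁ : EuclideanSpace ℝ (Fin n)) = f w₁ := hgV w₁
    have h6 := hf0 w₁ hw₁
    linarith

lemma aux (d : ℕ) : ∀ (μ : Measure (EuclideanSpace ℝ (Fin n))),
    IsProbabilityMeasure μ → ∀ (A F : Set (EuclideanSpace ℝ (Fin n)))
    (V : Submodule ℝ (EuclideanSpace ℝ (Fin n))),
    Integrable (fun u : EuclideanSpace ℝ (Fin n) => u) μ →
    Convex ℝ A → spt μ ⊆ A → IsExtreme ℝ A F → (∫ u, u ∂μ) ∈ F →
    (∀ a ∈ A, a - (∫ u, u ∂μ) ∈ V) → Module.finrank ℝ V ≤ d →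
    spt μ ⊆ F := by
  induction d with
  | zero =>
    intro μ hprob A F V hint hA hsupp hface hE hV hd
    have hV0 : V = ⊥ := Submodule.finrank_eq_zero.mp (Nat.le_zero.mp hd)
    intro x hx
    have hxA := hsupp hx
    have hx0 : x - (∫ u, u ∂μ) = 0 := by
      have := hV x hxA
      rwa [hV0, Submodule.mem_bot] at this
    have : x = ∫ u, u ∂μ := by
      have := sub_eq_zero.mp hx0
      exact this
    rwa [this]
  | succ d ih =>
    intro μ hprob A F V hint hA hsupp hface hE hV hd
    haveI := hprob
    set b : EuclideanSpace ℝ (Fin n) := ∫ u, u ∂μ with hbdef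
    have hbA : b ∈ A := hface.1 hE
    by_cases hP : ∀ x ∈ A, ∃ ε : ℝ, 0 < ε ∧ b + ε • (b - x) ∈ A
    · -- b is in the algebraic relative interior: A ⊆ F
      intro x hx
      have hxA := hsupp hx
      obtain ⟨ε, hε, hy⟩ := hP x hxA
      by_cases hxb : x = b
      · rwa [hxb]
      have hseg : b ∈ openSegment ℝ x (b + ε • (b - x)) := by
        refine ⟨ε / (1 + ε), 1 / (1 + ε), by positivity, by positivity, ?_, ?_⟩
        · field_simp
          ring
        · have h1ε : (1 : ℝ) + ε ≠ 0 := by positivity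
          match_scalars <;> field_simp <;> ring
      exact hface.2 hxA hy hE hseg
    · push_neg at hP
      obtain ⟨x₀, hx₀A, hx₀⟩ := hP
      have hx₀' : ∀ ε : ℝ, 0 < ε → b + ε • (b - x₀) ∉ A := fun ε hε => hx₀ ε hε
      obtain ⟨g, hg1, a₁, ha₁A, ha₁⟩ := exists_support_functional hA hbA hx₀A hx₀'
      have hgint : Integrable (fun u => g u) μ := g.integrable_comp hint
      have hgB : ∫ u, g u ∂μ = g b := g.integral_comp_comm hint
      have haeA : ∀ᵐ u ∂μ, u ∈ spt μ := by
        rw [ae_iff]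
        exact measure_compl_spt μ
      have haele : ∀ᵐ u ∂μ, g u ≤ g b := haeA.mono fun u hu => hg1 u (hsupp hu)
      have h0 : ∫ u, (g b - g u) ∂μ = 0 := by
        rw [integral_sub (integrable_const _) hgint, hgB, integral_const, probReal_univ]
        simp
      have haeeq : ∀ᵐ u ∂μ, g b - g u = 0 :=
        (integral_eq_zero_iff_of_nonneg_ae (haele.mono fun u h => sub_nonneg.2 h)
          ((integrable_const _).sub hgint)).mp h0
      have hnull : μ {u : EuclideanSpace ℝ (Fin n) | g u < g b} = 0 := by
        refine measure_mono_null ?_ (ae_iff.mp haeeq)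
        intro u hu
        simp only [Set.mem_setOf_eq] at hu ⊢
        intro hc
        exact absurd (by linarith : g u = g b) (ne_of_lt hu)
      have hsptH : spt μ ⊆ {u : EuclideanSpace ℝ (Fin n) | g u = g b} := by
        intro x hx
        by_contra hne
        have hlt : g x < g b := lt_of_le_of_ne (hg1 x (hsupp hx)) hne
        have hUopen : IsOpen {u : EuclideanSpace ℝ (Fin n) | g u < g b} :=
          isOpen_lt g.continuous continuous_const
        have hpos := hx _ hUopen hlt
        rw [hnull] at hpos
        exact lt_irrefl 0 hpos
      set H : Set (EuclideanSpace ℝ (Fin n)) := {u | g u = g b} with hHdef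
      have hHconv : Convex ℝ H := by
        intro u hu v hv t s ht hs hts
        simp only [hHdef, Set.mem_setOf_eq] at hu hv ⊢
        rw [map_add, g.map_smul, g.map_smul, hu, hv, smul_eq_mul, smul_eq_mul, ← add_mul, hts, one_mul]
      have hface2 : IsExtreme ℝ (A ∩ H) (F ∩ H) := by
        constructor
        · exact Set.inter_subset_inter_left H hface.1
        · intro x1 hx1 x2 hx2 x hx hseg
          exact ⟨hface.2 hx1.1 hx2.1 hx.1 hseg, hx1.2⟩
      have hE2 : b ∈ F ∩ H := ⟨hE, rfl⟩
      have hV2 : ∀ a ∈ A ∩ H, a - b ∈ V ⊓ LinearMap.ker (g : EuclideanSpace ℝ (Fin n) →ₗ[ℝ] ℝ) := by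
        intro a ha
        refine Submodule.mem_inf.mpr ⟨hV a ha.1, LinearMap.mem_ker.mpr ?_⟩
        have h2 : g a = g b := ha.2
        show g (a - b) = 0
        rw [map_sub, h2, sub_self]
      have hlt : V ⊓ LinearMap.ker (g : EuclideanSpace ℝ (Fin n) →ₗ[ℝ] ℝ) < V := by
        refine lt_of_le_of_ne inf_le_left fun hEq => ?_
        have hmem : a₁ - b ∈ V ⊓ LinearMap.ker (g : EuclideanSpace ℝ (Fin n) →ₗ[ℝ] ℝ) := by rw [hEq]; exact hV a₁ ha₁A
        have hker : g (a₁ - b) = 0 := LinearMap.mem_ker.mp (Submodule.mem_inf.mp hmem).2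
        rw [map_sub] at hker
        have heq2 : g a₁ = g b := by linarith
        exact absurd heq2 (ne_of_lt ha₁)
      have hd2 : Module.finrank ℝ (V ⊓ LinearMap.ker (g : EuclideanSpace ℝ (Fin n) →ₗ[ℝ] ℝ) : Submodule ℝ (EuclideanSpace ℝ (Fin n))) ≤ d := by
        have := Submodule.finrank_lt_finrank_of_lt hlt
        omega
      have := ih μ hprob (A ∩ H) (F ∩ H) (V ⊓ LinearMap.ker (g : EuclideanSpace ℝ (Fin n) →ₗ[ℝ] ℝ)) hint
        (hA.inter hHconv) (fun x hx => ⟨hsupp hx, hsptH hx⟩) hface2 hE2 hV2 hd2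
      exact fun x hx => (this hx).1

end Stmt18Aux

/-- Let `μ` be a Borel probability measure on `ℝⁿ` with finite first
moment, `A` a convex set containing `supp(μ)`, and `F` a (μ-measurable) face of `A`.
If the expected value `E[μ] = ∫ u dμ(u)` lies in `F`, then `supp(μ) ⊆ F`. The support
of `μ` is the set of points all of whose neighborhoods have positive measure. -/
theorem stmt18 {n : ℕ} (μ : Measure (EuclideanSpace ℝ (Fin n)))
    [IsProbabilityMeasure μ]
    (hμ : Integrable (fun u => ‖u‖) μ)
    (A F : Set (EuclideanSpace ℝ (Fin n)))
    (hA : Convex ℝ A)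
    (hsupp : {x : EuclideanSpace ℝ (Fin n) |
      ∀ U : Set (EuclideanSpace ℝ (Fin n)), IsOpen U → x ∈ U → 0 < μ U} ⊆ A)
    (hFface : IsExtreme ℝ A F) (hFconv : Convex ℝ F) (hFne : F.Nonempty)
    (hFmeas : MeasurableSet F)
    (hE : (∫ u, u ∂μ) ∈ F) :
    {x : EuclideanSpace ℝ (Fin n) |
      ∀ U : Set (EuclideanSpace ℝ (Fin n)), IsOpen U → x ∈ U → 0 < μ U} ⊆ F := by
  have hid : Integrable (fun u : EuclideanSpace ℝ (Fin n) => u) μ := by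
    have := (integrable_norm_iff (aestronglyMeasurable_id :
      AEStronglyMeasurable (fun u : EuclideanSpace ℝ (Fin n) => u) μ)).mp hμ
    exact this
  have hVtop : ∀ a ∈ A, a - (∫ u, u ∂μ) ∈ (⊤ : Submodule ℝ (EuclideanSpace ℝ (Fin n))) :=
    fun a _ => trivial
  have hrank : Module.finrank ℝ (⊤ : Submodule ℝ (EuclideanSpace ℝ (Fin n))) ≤ n := by
    rw [finrank_top]
    simp [finrank_euclideanSpace_fin]
  exact Stmt18Aux.aux n μ inferInstance A F ⊤ hid hA hsupp hFface hE hVtop hrank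
end
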